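/- arXiv:1810.00309 — 3 statements merged into one kernel-verified Lean document; each statement's English description precedes it below -/
import Mathlib

section
/- Let n ≥ 1 and let Φ = (p₁, Q̃₁, p₂+P̃₂, Q̃₂, …, pₙ+P̃ₙ, Q̃ₙ) and Φ′ = (p₁, Q̃₁′, p₂+P̃₂′, Q̃₂′, …, pₙ+P̃ₙ′, Q̃ₙ′) be two smooth map germs at 0 of ℝ^{2n} in normal form, i.e. ∂Q̃ᵢ/∂qᵢ(0) ≠ 0 and Q̃ᵢ ∈ I_{2i−1} for i = 1,…,n, P̃ᵢ ∈ I_{2i−2} for i = 2,…,n, and the same conditions for the primed data. If there exists a local symplectomorphism Ψ of ω₀ with Φ′∘Ψ = Φ on a neighbourhood of 0, then Ψ is the identity map on a neighbourhood of 0, and consequently Q̃ᵢ = Q̃ᵢ′ (i = 1,…,n) and P̃ᵢ = P̃ᵢ′ (i = 2,…,n) as germs at 0. -/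
open Filter Topology

noncomputable section

/-- `ℝ^{2n}` with coordinates `(p, q) = (p₁,…,pₙ,q₁,…,qₙ)`. -/
abbrev PQ (n : ℕ) : Type := (Fin n → ℝ) × (Fin n → ℝ)

/-- A smooth germ at `0`: a function which is `C^∞` on some neighbourhood of `0`. -/
def SmoothGerm {E F : Type*} [NormedAddCommGroup E] [NormedSpace ℝ E]
    [NormedAddCommGroup F] [NormedSpace ℝ F] (f : E → F) : Prop :=
  ∃ U ∈ 𝓝 (0 : E), ContDiffOn ℝ (⊤ : ℕ∞) f U

/-- The standard symplectic form `ω₀ = Σᵢ dpᵢ∧dqᵢ` on `ℝ^{2n}` as a constant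
alternating bilinear form. -/
def omega0 (n : ℕ) (u v : PQ n) : ℝ := ∑ i : Fin n, (u.1 i * v.2 i - u.2 i * v.1 i)

/-- A local symplectomorphism of `ω₀`: `Ψ(0) = 0`, smooth near `0`, invertible
derivative, and `DΨ(z)` preserves `ω₀` for all `z` near `0`. -/
def IsLocalSymp (n : ℕ) (Ψ : PQ n → PQ n) : Prop :=
  Ψ 0 = 0 ∧ SmoothGerm Ψ ∧ Function.Bijective ⇑(fderiv ℝ Ψ 0) ∧
    ∀ᶠ z in 𝓝 (0 : PQ n), ∀ u v : PQ n,
      omega0 n (fderiv ℝ Ψ z u) (fderiv ℝ Ψ z v) = omega0 n u v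

/-- The `j`-th generator (0-indexed) of the list `q₁,p₁,q₂,p₂,…,qₙ,pₙ`. -/
def genFun (n j : ℕ) (z : PQ n) : ℝ :=
  if h : j / 2 < n then (if j % 2 = 0 then z.2 ⟨j / 2, h⟩ else z.1 ⟨j / 2, h⟩) else 0

/-- Membership (as germs at `0`) in the ideal `I_k` generated by the first `k`
functions of the list `q₁,p₁,q₂,p₂,…,qₙ,pₙ`. -/
def InIdeal (n k : ℕ) (g : PQ n → ℝ) : Prop :=
  ∃ c : Fin k → (PQ n → ℝ), (∀ j, SmoothGerm (c j)) ∧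
    ∀ᶠ z in 𝓝 (0 : PQ n), g z = ∑ j : Fin k, c j z * genFun n j.1 z

namespace DNFI
variable {n : ℕ}
def eP (n : ℕ) (j : Fin n) : PQ n := (Pi.single j 1, 0)
def eQ (n : ℕ) (j : Fin n) : PQ n := (0, Pi.single j 1)

-- decomposition of a vector in the standard basis
lemma decomp (u : PQ n) :
    u = ∑ j : Fin n, (u.1 j • eP n j + u.2 j • eQ n j) := by
  have h1 : (∑ j : Fin n, (u.1 j • eP n j + u.2 j • eQ n j)).1
      = ∑ j : Fin n, u.1 j • (Pi.single j (1:ℝ) : Fin n → ℝ) := by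
    simp [eP, eQ, Prod.fst_sum]
  have h2 : (∑ j : Fin n, (u.1 j • eP n j + u.2 j • eQ n j)).2
      = ∑ j : Fin n, u.2 j • (Pi.single j (1:ℝ) : Fin n → ℝ) := by
    simp [eP, eQ, Prod.snd_sum]
  refine Prod.ext ?_ ?_
  · rw [h1]; funext k
    simp [Finset.sum_apply, Pi.single_apply, mul_ite]
  · rw [h2]; funext k
    simp [Finset.sum_apply, Pi.single_apply, mul_ite]

lemma fix_of_zpair (D : PQ n →L[ℝ] PQ n) (i : ℕ)
    (hD : ∀ j : Fin n, j.1 < i → D (eP n j) = eP n j ∧ D (eQ n j) = eQ n j)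
    (v : PQ n) (hv : ∀ j : Fin n, i ≤ j.1 → v.1 j = 0 ∧ v.2 j = 0) : D v = v := by
  conv_lhs => rw [decomp v]
  rw [map_sum]
  conv_rhs => rw [decomp v]
  refine Finset.sum_congr rfl fun j _ => ?_
  rcases lt_or_ge j.1 i with hj | hj
  · rw [map_add, map_smul, map_smul, (hD j hj).1, (hD j hj).2]
  · rw [(hv j hj).1, (hv j hj).2]; simp

lemma genFun_eval_q (j : Fin n) (z : PQ n) : genFun n (2*j.1) z = z.2 j := by
  have h1 : 2*j.1/2 = j.1 := by omega
  have h2 : 2*j.1 % 2 = 0 := by omega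
  simp only [genFun, h1, h2, j.2, dif_pos, if_pos]

lemma genFun_zero {i : ℕ} (hi : i ≤ n) {w : PQ n}
    (hw : ∀ j : Fin n, j.1 < i → w.1 j = 0 ∧ w.2 j = 0) {m : ℕ} (hm : m < 2*i) :
    genFun n m w = 0 := by
  have hd : m / 2 < i := by omega
  have hdn : m / 2 < n := lt_of_lt_of_le hd hi
  have := hw ⟨m/2, hdn⟩ hd
  simp only [genFun, hdn, dif_pos]
  split_ifs
  · exact this.2
  · exact this.1

lemma genFun_eQ_lt {i : Fin n} {m : ℕ} (hm : m < 2*i.1) : genFun n m (eQ n i) = 0 := by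
  have hd : m / 2 < i.1 := by omega
  rcases Nat.lt_or_ge (m/2) n with h | h
  · have hne : m/2 ≠ i.1 := by omega
    simp only [genFun, h, dif_pos, eQ]
    split_ifs
    · simp [Pi.single_apply, Fin.ext_iff, hne]
    · rfl
  · simp [genFun, h]

lemma genFun_eQ_last (i : Fin n) : genFun n (2*i.1) (eQ n i) = 1 := by
  rw [genFun_eval_q]; simp [eQ]
section D
open ContinuousLinearMap in
noncomputable def genCLM (n j : ℕ) : PQ n →L[ℝ] ℝ :=
  if h : j / 2 < n then
    (if j % 2 = 0 then (proj (⟨j/2, h⟩ : Fin n)).comp (snd ℝ _ _)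
      else (proj (⟨j/2, h⟩ : Fin n)).comp (fst ℝ _ _))
  else 0

lemma genCLM_apply (j : ℕ) (z : PQ n) : genCLM n j z = genFun n j z := by
  unfold genCLM genFun
  split_ifs <;> rfl

lemma smoothGerm_contDiffAt {E F : Type*} [NormedAddCommGroup E] [NormedSpace ℝ E]
    [NormedAddCommGroup F] [NormedSpace ℝ F] {f : E → F} (hf : SmoothGerm f) :
    ContDiffAt ℝ (⊤:ℕ∞) f 0 := by
  obtain ⟨U, hU, h⟩ := hf
  exact h.contDiffAt hU

lemma coeff_last_ne_zero {i : Fin n} {g : PQ n → ℝ} (c : Fin (2*i.1+1) → PQ n → ℝ)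
    (hcsm : ∀ j, SmoothGerm (c j))
    (heq : ∀ᶠ z in 𝓝 (0:PQ n), g z = ∑ j : Fin (2*i.1+1), c j z * genFun n j.1 z)
    (hd : fderiv ℝ g 0 (eQ n i) ≠ 0) : c (Fin.last _) 0 ≠ 0 := by
  have hterm : ∀ j : Fin (2*i.1+1), HasFDerivAt (fun z => c j z * genFun n j.1 z)
      (c j 0 • genCLM n j.1) 0 := by
    intro j
    have h1 : HasFDerivAt (c j) (fderiv ℝ (c j) 0) 0 :=
      ((smoothGerm_contDiffAt (hcsm j)).differentiableAt (by norm_num)).hasFDerivAt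
    have h2 : HasFDerivAt (genFun n j.1) (genCLM n j.1) 0 := by
      have := (genCLM n j.1).hasFDerivAt (x := (0:PQ n))
      exact this.congr_of_eventuallyEq (by filter_upwards with z using (genCLM_apply j.1 z).symm)
    have h3 := h1.mul h2
    have hg0 : genFun n j.1 (0:PQ n) = 0 := by
      unfold genFun; split_ifs <;> rfl
    rw [hg0] at h3
    simp at h3; exact h3
  have hsum : HasFDerivAt (fun z => ∑ j : Fin (2*i.1+1), c j z * genFun n j.1 z)
      (∑ j : Fin (2*i.1+1), c j 0 • genCLM n j.1) 0 :=
    HasFDerivAt.fun_sum (fun j _ => hterm j)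
  have heq' : g =ᶠ[𝓝 (0:PQ n)] fun z => ∑ j : Fin (2*i.1+1), c j z * genFun n j.1 z := heq
  have hfd : fderiv ℝ g 0 = ∑ j : Fin (2*i.1+1), c j 0 • genCLM n j.1 := by
    rw [heq'.fderiv_eq]
    exact hsum.fderiv
  rw [hfd] at hd
  intro h0
  apply hd
  rw [ContinuousLinearMap.sum_apply]
  refine Finset.sum_eq_zero fun j _ => ?_
  rw [ContinuousLinearMap.smul_apply, genCLM_apply]
  rcases Nat.lt_or_ge j.1 (2*i.1) with hj | hj
  · rw [genFun_eQ_lt hj, smul_zero]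
  · have : j = Fin.last _ := by
      have := j.2; apply Fin.ext; simp only [Fin.val_last]; omega
    rw [this, h0, zero_smul]
end D
lemma omega0_eQ (u : PQ n) (j : Fin n) : omega0 n u (eQ n j) = u.1 j := by
  simp [omega0, eQ, Pi.single_apply, mul_ite]

lemma omega0_eP (u : PQ n) (j : Fin n) : omega0 n u (eP n j) = -(u.2 j) := by
  simp [omega0, eP, Pi.single_apply, mul_ite]

lemma eP_left (v : PQ n) (j : Fin n) : omega0 n (eP n j) v = v.2 j := by
  simp [omega0, eP, Pi.single_apply, ite_mul]

lemma eQ_left (v : PQ n) (j : Fin n) : omega0 n (eQ n j) v = -(v.1 j) := by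
  simp [omega0, eQ, Pi.single_apply, ite_mul]

lemma omega0_sub_right (u v w : PQ n) :
    omega0 n u (v - w) = omega0 n u v - omega0 n u w := by
  simp only [omega0, ← Finset.sum_sub_distrib]
  exact Finset.sum_congr rfl fun i _ => by simp [Prod.fst_sub, Prod.snd_sub]; ring

lemma omega0_zero_right (u : PQ n) : omega0 n u 0 = 0 := by simp [omega0]

lemma omega0_nondeg {v : PQ n} (h : ∀ u, omega0 n u v = 0) : v = 0 := by
  have h1 : ∀ j, v.1 j = 0 := fun j => by
    have := h (eQ n j); rw [eQ_left] at this; linarith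
  have h2 : ∀ j, v.2 j = 0 := fun j => by
    have := h (eP n j); rwa [eP_left] at this
  exact Prod.ext (funext h1) (funext h2)

lemma surj_of_omega (D : PQ n →L[ℝ] PQ n)
    (h : ∀ u v, omega0 n (D u) (D v) = omega0 n u v) : Function.Surjective D := by
  have hinj : Function.Injective D := by
    intro a b hab
    have h0 : D (a - b) = 0 := by rw [map_sub, hab, sub_self]
    have : a - b = 0 := by
      refine omega0_nondeg fun u => ?_
      calc omega0 n u (a - b) = omega0 n (D u) (D (a-b)) := (h u _).symm
        _ = 0 := by rw [h0]; exact omega0_zero_right _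
    exact sub_eq_zero.mp this
  exact (LinearMap.injective_iff_surjective (f := (D : PQ n →ₗ[ℝ] PQ n))).mp hinj

/-- If `Ψ` preserves the coordinate `p_j` near `0` then its derivative fixes `e_{q_j}`. -/
lemma fderiv_fix_eQ {Ψ : PQ n → PQ n} {r : ℝ}
    (hF : ∀ z ∈ Metric.ball (0:PQ n) r, HasFDerivAt Ψ (fderiv ℝ Ψ z) z)
    (hω : ∀ z ∈ Metric.ball (0:PQ n) r, ∀ u v,
      omega0 n (fderiv ℝ Ψ z u) (fderiv ℝ Ψ z v) = omega0 n u v)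
    (j : Fin n) (hp : ∀ z ∈ Metric.ball (0:PQ n) r, (Ψ z).1 j = z.1 j)
    {z : PQ n} (hz : z ∈ Metric.ball (0:PQ n) r) :
    fderiv ℝ Ψ z (eQ n j) = eQ n j := by
  set D := fderiv ℝ Ψ z with hD
  set π : PQ n →L[ℝ] ℝ :=
    (ContinuousLinearMap.proj j).comp (ContinuousLinearMap.fst ℝ (Fin n → ℝ) (Fin n → ℝ)) with hπ
  have hcoord : ∀ u, (D u).1 j = u.1 j := by
    have h1 : HasFDerivAt (fun w => (Ψ w).1 j) (π.comp D) z := (π.hasFDerivAt).comp z (hF z hz)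
    have heq : (fun w : PQ n => w.1 j) =ᶠ[𝓝 z] (fun w => (Ψ w).1 j) := by
      filter_upwards [Metric.isOpen_ball.mem_nhds hz] with w hw using (hp w hw).symm
    have h2 : HasFDerivAt (fun w : PQ n => w.1 j) (π.comp D) z := h1.congr_of_eventuallyEq heq
    have h3 : HasFDerivAt (fun w : PQ n => w.1 j) π z := by
      have := π.hasFDerivAt (x := z); exact this
    have h4 : π.comp D = π := h2.unique h3
    intro u
    have := congrArg (fun T : PQ n →L[ℝ] ℝ => T u) h4
    simpa [hπ] using this
  have hsurj := surj_of_omega D (hω z hz)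
  have hzero : ∀ w, omega0 n w (D (eQ n j) - eQ n j) = 0 := by
    intro w
    obtain ⟨u, rfl⟩ := hsurj w
    rw [omega0_sub_right, hω z hz u (eQ n j), omega0_eQ, omega0_eQ, hcoord]
    ring
  have := omega0_nondeg hzero
  exact sub_eq_zero.mp this

/-- If `Ψ` preserves the coordinate `q_j` near `0` then its derivative fixes `e_{p_j}`. -/
lemma fderiv_fix_eP {Ψ : PQ n → PQ n} {r : ℝ}
    (hF : ∀ z ∈ Metric.ball (0:PQ n) r, HasFDerivAt Ψ (fderiv ℝ Ψ z) z)
    (hω : ∀ z ∈ Metric.ball (0:PQ n) r, ∀ u v,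
      omega0 n (fderiv ℝ Ψ z u) (fderiv ℝ Ψ z v) = omega0 n u v)
    (j : Fin n) (hq : ∀ z ∈ Metric.ball (0:PQ n) r, (Ψ z).2 j = z.2 j)
    {z : PQ n} (hz : z ∈ Metric.ball (0:PQ n) r) :
    fderiv ℝ Ψ z (eP n j) = eP n j := by
  set D := fderiv ℝ Ψ z with hD
  set π : PQ n →L[ℝ] ℝ :=
    (ContinuousLinearMap.proj j).comp (ContinuousLinearMap.snd ℝ (Fin n → ℝ) (Fin n → ℝ)) with hπ
  have hcoord : ∀ u, (D u).2 j = u.2 j := by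
    have h1 : HasFDerivAt (fun w => (Ψ w).2 j) (π.comp D) z := (π.hasFDerivAt).comp z (hF z hz)
    have heq : (fun w : PQ n => w.2 j) =ᶠ[𝓝 z] (fun w => (Ψ w).2 j) := by
      filter_upwards [Metric.isOpen_ball.mem_nhds hz] with w hw using (hq w hw).symm
    have h2 : HasFDerivAt (fun w : PQ n => w.2 j) (π.comp D) z := h1.congr_of_eventuallyEq heq
    have h3 : HasFDerivAt (fun w : PQ n => w.2 j) π z := by
      have := π.hasFDerivAt (x := z); exact this
    have h4 : π.comp D = π := h2.unique h3
    intro u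
    have := congrArg (fun T : PQ n →L[ℝ] ℝ => T u) h4
    simpa [hπ] using this
  have hsurj := surj_of_omega D (hω z hz)
  have hzero : ∀ w, omega0 n w (D (eP n j) - eP n j) = 0 := by
    intro w
    obtain ⟨u, rfl⟩ := hsurj w
    rw [omega0_sub_right, hω z hz u (eP n j), omega0_eP, omega0_eP, hcoord]
    ring
  have := omega0_nondeg hzero
  exact sub_eq_zero.mp this

/-- Translation lemma: if the derivative of `Ψ` fixes `v` on a ball, then
`Ψ` commutes with translation by `v` inside the ball. -/
lemma translate {Ψ : PQ n → PQ n} {r : ℝ}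
    (hF : ∀ z ∈ Metric.ball (0:PQ n) r, HasFDerivAt Ψ (fderiv ℝ Ψ z) z)
    (v : PQ n) (hv : ∀ z ∈ Metric.ball (0:PQ n) r, fderiv ℝ Ψ z v = v)
    {z : PQ n} (hz : z ∈ Metric.ball (0:PQ n) r) (hzv : z + v ∈ Metric.ball (0:PQ n) r) :
    Ψ (z + v) = Ψ z + v := by
  set γ : ℝ → PQ n := fun t => Ψ (z + t • v) - t • v with hγ
  have hmem : ∀ t ∈ Set.Icc (0:ℝ) 1, z + t • v ∈ Metric.ball (0:PQ n) r := by
    intro t ht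
    have := convex_ball (0:PQ n) r hz hzv (by linarith [ht.2] : (0:ℝ) ≤ 1 - t) ht.1 (by ring)
    convert this using 1
    module
  have hderiv : ∀ t ∈ Set.Icc (0:ℝ) 1, HasDerivWithinAt γ 0 (Set.Icc (0:ℝ) 1) t := by
    intro t ht
    have hline : HasDerivAt (fun s : ℝ => z + s • v) v t := by
      simpa using (hasDerivAt_id t).smul_const v |>.const_add z
    have hΨd : HasDerivAt (fun s : ℝ => Ψ (z + s • v)) (fderiv ℝ Ψ (z + t • v) v) t :=
      (hF _ (hmem t ht)).comp_hasDerivAt t hline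
    have h2 : HasDerivAt (fun s : ℝ => (s • v : PQ n)) v t := by
      simpa using (hasDerivAt_id t).smul_const v
    have := hΨd.sub h2
    rw [hv _ (hmem t ht), sub_self] at this
    exact this.hasDerivWithinAt
  have hconst := Convex.norm_image_sub_le_of_norm_hasDerivWithin_le
    (f := γ) (f' := fun _ => 0) (C := 0) hderiv (fun x _ => by simp) (convex_Icc 0 1)
    (Set.left_mem_Icc.2 zero_le_one) (Set.right_mem_Icc.2 zero_le_one)
  have h10 : γ 1 = γ 0 := by
    have : ‖γ 1 - γ 0‖ ≤ 0 := by simpa using hconst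
    have := norm_le_zero_iff.mp this
    exact sub_eq_zero.mp this
  have e1 : γ 1 = Ψ (z + v) - v := by simp [hγ]
  have e0 : γ 0 = Ψ z := by simp [hγ]
  rw [e1, e0] at h10
  exact sub_eq_iff_eq_add.mp h10 |>.trans (by abel)

lemma normcomp {z w : PQ n} (h1 : ∀ j, w.1 j = z.1 j ∨ w.1 j = 0)
    (h2 : ∀ j, w.2 j = z.2 j ∨ w.2 j = 0) : ‖w‖ ≤ ‖z‖ := by
  rw [Prod.norm_def]
  refine max_le ?_ ?_
  · refine (pi_norm_le_iff_of_nonneg (norm_nonneg z)).2 fun j => ?_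
    rcases h1 j with h | h <;> rw [h]
    · exact (norm_le_pi_norm z.1 j).trans (norm_fst_le z)
    · simp
  · refine (pi_norm_le_iff_of_nonneg (norm_nonneg z)).2 fun j => ?_
    rcases h2 j with h | h <;> rw [h]
    · exact (norm_le_pi_norm z.2 j).trans (norm_snd_le z)
    · simp

end DNFI

/-- the functions `Q̃ᵢ`, `P̃ᵢ` in the normal form of Theorem 1 are
functional invariants: any symplectomorphism conjugating two normal forms is the
identity, and the corresponding invariants coincide as germs. -/
theorem diffeo_normal_form_invariants (n : ℕ) (hn : 1 ≤ n)
    (Pt Qt Pt' Qt' : Fin n → (PQ n → ℝ))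
    (hPsm : ∀ i, SmoothGerm (Pt i)) (hQsm : ∀ i, SmoothGerm (Qt i))
    (hPsm' : ∀ i, SmoothGerm (Pt' i)) (hQsm' : ∀ i, SmoothGerm (Qt' i))
    (hPt0 : Pt ⟨0, hn⟩ = 0) (hPt0' : Pt' ⟨0, hn⟩ = 0)
    (hQd : ∀ i : Fin n, fderiv ℝ (Qt i) 0 ((0, Pi.single i 1) : PQ n) ≠ 0)
    (hQd' : ∀ i : Fin n, fderiv ℝ (Qt' i) 0 ((0, Pi.single i 1) : PQ n) ≠ 0)
    (hPI : ∀ i : Fin n, InIdeal n (2 * i.1) (Pt i))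
    (hQI : ∀ i : Fin n, InIdeal n (2 * i.1 + 1) (Qt i))
    (hPI' : ∀ i : Fin n, InIdeal n (2 * i.1) (Pt' i))
    (hQI' : ∀ i : Fin n, InIdeal n (2 * i.1 + 1) (Qt' i))
    (Ψ : PQ n → PQ n) (hΨ : IsLocalSymp n Ψ)
    (hconj : ∀ᶠ z in 𝓝 (0 : PQ n),
      ((fun i => (Ψ z).1 i + Pt' i (Ψ z), fun i => Qt' i (Ψ z)) : PQ n) =
        ((fun i => z.1 i + Pt i z, fun i => Qt i z) : PQ n)) :
    (∀ᶠ z in 𝓝 (0 : PQ n), Ψ z = z) ∧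
      (∀ i : Fin n, ∀ᶠ z in 𝓝 (0 : PQ n), Qt i z = Qt' i z) ∧
      (∀ i : Fin n, ∀ᶠ z in 𝓝 (0 : PQ n), Pt i z = Pt' i z) := by
  classical
  obtain ⟨hΨ0, hΨsm, _hbij, hω⟩ := hΨ
  choose cP hcPsm hcPeq using hPI
  choose cQ hcQsm hcQeq using hQI
  choose cP' hcP'sm hcP'eq using hPI'
  choose cQ' hcQ'sm hcQ'eq using hQI'
  obtain ⟨U, hU, hUsm⟩ := hΨsm
  set V := interior U with hVdef
  have hVopen : IsOpen V := isOpen_interior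
  have hV0 : (0:PQ n) ∈ V := mem_interior_iff_mem_nhds.2 hU
  have hΨsmV : ContDiffOn ℝ (⊤:ℕ∞) Ψ V := hUsm.mono interior_subset
  have hFz : ∀ z ∈ V, HasFDerivAt Ψ (fderiv ℝ Ψ z) z := fun z hz =>
    ((hΨsmV.contDiffAt (hVopen.mem_nhds hz)).differentiableAt (by norm_num)).hasFDerivAt
  have hΨtend : Filter.Tendsto Ψ (𝓝 (0:PQ n)) (𝓝 (0:PQ n)) := by
    have := (hΨsmV.contDiffAt (hVopen.mem_nhds hV0)).continuousAt
    rwa [ContinuousAt, hΨ0] at this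
  -- nonvanishing of the last coefficient of each Qt' decomposition
  have hlast : ∀ i : Fin n, cQ' i (Fin.last _) 0 ≠ 0 := fun i =>
    DNFI.coeff_last_ne_zero (cQ' i) (hcQ'sm i) (hcQ'eq i) (hQd' i)
  have hlastev : ∀ i : Fin n, ∀ᶠ z in 𝓝 (0:PQ n), cQ' i (Fin.last _) (Ψ z) ≠ 0 := by
    intro i
    have hc : ContinuousAt (cQ' i (Fin.last _)) 0 :=
      (DNFI.smoothGerm_contDiffAt (hcQ'sm i _)).continuousAt
    exact hΨtend.eventually (hc.eventually_ne (hlast i))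
  -- decompositions of the primed data pulled back through Ψ
  have hcP'Ψ : ∀ i : Fin n, ∀ᶠ z in 𝓝 (0:PQ n),
      Pt' i (Ψ z) = ∑ j : Fin (2*i.1), cP' i j (Ψ z) * genFun n j.1 (Ψ z) :=
    fun i => hΨtend.eventually (hcP'eq i)
  have hcQ'Ψ : ∀ i : Fin n, ∀ᶠ z in 𝓝 (0:PQ n),
      Qt' i (Ψ z) = ∑ j : Fin (2*i.1+1), cQ' i j (Ψ z) * genFun n j.1 (Ψ z) :=
    fun i => hΨtend.eventually (hcQ'eq i)
  -- collect everything on one ball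
  have hBig : ∀ᶠ z in 𝓝 (0:PQ n), (z ∈ V ∧
      (∀ u v, omega0 n (fderiv ℝ Ψ z u) (fderiv ℝ Ψ z v) = omega0 n u v) ∧
      ((fun i => (Ψ z).1 i + Pt' i (Ψ z), fun i => Qt' i (Ψ z)) : PQ n) =
        ((fun i => z.1 i + Pt i z, fun i => Qt i z) : PQ n)) ∧
      ((∀ i : Fin n, Pt i z = ∑ j : Fin (2*i.1), cP i j z * genFun n j.1 z) ∧
      (∀ i : Fin n, Qt i z = ∑ j : Fin (2*i.1+1), cQ i j z * genFun n j.1 z) ∧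
      (∀ i : Fin n, Pt' i (Ψ z) = ∑ j : Fin (2*i.1), cP' i j (Ψ z) * genFun n j.1 (Ψ z)) ∧
      (∀ i : Fin n, Qt' i (Ψ z) = ∑ j : Fin (2*i.1+1), cQ' i j (Ψ z) * genFun n j.1 (Ψ z)) ∧
      (∀ i : Fin n, cQ' i (Fin.last _) (Ψ z) ≠ 0)) := by
    filter_upwards [hVopen.mem_nhds hV0, hω, hconj, Filter.eventually_all.2 hcPeq,
      Filter.eventually_all.2 hcQeq, Filter.eventually_all.2 hcP'Ψ,
      Filter.eventually_all.2 hcQ'Ψ, Filter.eventually_all.2 hlastev] with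
      z h1 h2 h3 h4 h5 h6 h7 h8
    exact ⟨⟨h1, h2, h3⟩, h4, h5, h6, h7, h8⟩
  obtain ⟨r, hr, hB⟩ := Metric.eventually_nhds_iff.mp hBig
  set B := Metric.ball (0:PQ n) r with hBdef
  have hVb : ∀ z ∈ B, z ∈ V := fun z hz => (hB (Metric.mem_ball.mp hz)).1.1
  have hωb : ∀ z ∈ B, ∀ u v, omega0 n (fderiv ℝ Ψ z u) (fderiv ℝ Ψ z v) = omega0 n u v :=
    fun z hz => (hB (Metric.mem_ball.mp hz)).1.2.1
  have hconjb : ∀ z ∈ B, ((fun i => (Ψ z).1 i + Pt' i (Ψ z), fun i => Qt' i (Ψ z)) : PQ n) =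
      ((fun i => z.1 i + Pt i z, fun i => Qt i z) : PQ n) :=
    fun z hz => (hB (Metric.mem_ball.mp hz)).1.2.2
  have hPdec : ∀ z ∈ B, ∀ i : Fin n, Pt i z = ∑ j : Fin (2*i.1), cP i j z * genFun n j.1 z :=
    fun z hz => (hB (Metric.mem_ball.mp hz)).2.1
  have hQdec : ∀ z ∈ B, ∀ i : Fin n, Qt i z = ∑ j : Fin (2*i.1+1), cQ i j z * genFun n j.1 z :=
    fun z hz => (hB (Metric.mem_ball.mp hz)).2.2.1
  have hP'dec : ∀ z ∈ B, ∀ i : Fin n,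
      Pt' i (Ψ z) = ∑ j : Fin (2*i.1), cP' i j (Ψ z) * genFun n j.1 (Ψ z) :=
    fun z hz => (hB (Metric.mem_ball.mp hz)).2.2.2.1
  have hQ'dec : ∀ z ∈ B, ∀ i : Fin n,
      Qt' i (Ψ z) = ∑ j : Fin (2*i.1+1), cQ' i j (Ψ z) * genFun n j.1 (Ψ z) :=
    fun z hz => (hB (Metric.mem_ball.mp hz)).2.2.2.2.1
  have hcne : ∀ z ∈ B, ∀ i : Fin n, cQ' i (Fin.last _) (Ψ z) ≠ 0 :=
    fun z hz => (hB (Metric.mem_ball.mp hz)).2.2.2.2.2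
  have hFb : ∀ z ∈ B, HasFDerivAt Ψ (fderiv ℝ Ψ z) z := fun z hz => hFz z (hVb z hz)
  -- the key induction
  have key : ∀ i : ℕ, i ≤ n → ∀ z ∈ B, ∀ j : Fin n, j.1 < i →
      (Ψ z).1 j = z.1 j ∧ (Ψ z).2 j = z.2 j := by
    intro i
    induction i with
    | zero => intro _ z _ j hj; omega
    | succ i IH =>
      intro hi1 
      have hi : i < n := hi1
      have IH' := IH (Nat.le_of_succ_le hi1)
      set i' : Fin n := ⟨i, hi⟩ with hi'def
      have hival : (i' : ℕ) = i := rfl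
      have hfixlow : ∀ z' ∈ B, ∀ j : Fin n, j.1 < i →
          fderiv ℝ Ψ z' (DNFI.eP n j) = DNFI.eP n j ∧
          fderiv ℝ Ψ z' (DNFI.eQ n j) = DNFI.eQ n j := fun z' hz' j hj =>
        ⟨DNFI.fderiv_fix_eP hFb hωb j (fun w hw => (IH' w hw j hj).2) hz',
         DNFI.fderiv_fix_eQ hFb hωb j (fun w hw => (IH' w hw j hj).1) hz'⟩
      have htrans : ∀ v : PQ n, (∀ j : Fin n, i ≤ j.1 → v.1 j = 0 ∧ v.2 j = 0) →
          ∀ z' ∈ B, z' + v ∈ B → Ψ (z' + v) = Ψ z' + v := by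
        intro v hv z' hz' hzv
        exact DNFI.translate hFb v
          (fun w hw => DNFI.fix_of_zpair _ i (hfixlow w hw) v hv) hz' hzv
      -- abbreviation: the truncation of z
      have main : ∀ z ∈ B, (Ψ z).1 i' = z.1 i' ∧ (Ψ z).2 i' = z.2 i' := by
        -- step P: the p_i coordinate is preserved everywhere on B
        have hP : ∀ z ∈ B, (Ψ z).1 i' = z.1 i' := by
          intro z hz
          set w : PQ n := (fun j => if j.1 < i then 0 else z.1 j,
            fun j => if j.1 < i then 0 else z.2 j) with hwdef
          have hwb : w ∈ B := by
            rw [hBdef, mem_ball_zero_iff]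
            refine lt_of_le_of_lt (DNFI.normcomp (z := z) ?_ ?_) (mem_ball_zero_iff.mp hz)
            · intro j; by_cases h : j.1 < i <;> simp [hwdef, h]
            · intro j; by_cases h : j.1 < i <;> simp [hwdef, h]
          have hwzero : ∀ j : Fin n, j.1 < i → w.1 j = 0 ∧ w.2 j = 0 := by
            intro j hj; constructor <;> simp [hwdef, hj]
          have hΨwzero : ∀ j : Fin n, j.1 < i → (Ψ w).1 j = 0 ∧ (Ψ w).2 j = 0 := by
            intro j hj
            obtain ⟨a, b⟩ := IH' w hwb j hj
            exact ⟨a.trans (hwzero j hj).1, b.trans (hwzero j hj).2⟩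
          have hvz : ∀ j : Fin n, i ≤ j.1 → (z - w).1 j = 0 ∧ (z - w).2 j = 0 := by
            intro j hj
            constructor <;> simp [hwdef, Nat.not_lt.2 hj]
          have hΨzw : Ψ z = Ψ w + (z - w) := by
            have := htrans (z - w) hvz w hwb (by rw [add_sub_cancel]; exact hz)
            rwa [add_sub_cancel] at this
          have hPtw : Pt i' w = 0 := by
            rw [hPdec w hwb i']
            refine Finset.sum_eq_zero fun j _ => ?_
            rw [DNFI.genFun_zero (le_of_lt hi) hwzero (j.2 : j.1 < 2*i'.1), mul_zero]
          have hPt'Ψw : Pt' i' (Ψ w) = 0 := by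
            rw [hP'dec w hwb i']
            refine Finset.sum_eq_zero fun j _ => ?_
            rw [DNFI.genFun_zero (le_of_lt hi) hΨwzero (j.2 : j.1 < 2*i'.1), mul_zero]
          have hPw : (Ψ w).1 i' = w.1 i' := by
            have := congrFun (congrArg Prod.fst (hconjb w hwb)) i'
            simp only at this
            rw [hPtw, hPt'Ψw] at this
            linarith
          have h1 : (Ψ z).1 i' = (Ψ w).1 i' + (z.1 i' - w.1 i') := by
            rw [hΨzw]; rfl
          rw [h1, hPw]; ring
        -- derivative fixes e_{q_i}
        have hfixQ : ∀ z' ∈ B, fderiv ℝ Ψ z' (DNFI.eQ n i') = DNFI.eQ n i' :=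
          fun z' hz' => DNFI.fderiv_fix_eQ hFb hωb i' hP hz'
        -- step Q
        have hQ : ∀ z ∈ B, (Ψ z).2 i' = z.2 i' := by
          intro z hz
          set w : PQ n := (fun j => if j.1 < i then 0 else z.1 j,
            fun j => if j.1 < i then 0 else z.2 j) with hwdef
          set w' : PQ n := (fun j => if j.1 < i then 0 else z.1 j,
            fun j => if j.1 < i + 1 then 0 else z.2 j) with hw'def
          have hwb : w ∈ B := by
            rw [hBdef, mem_ball_zero_iff]
            refine lt_of_le_of_lt (DNFI.normcomp (z := z) ?_ ?_) (mem_ball_zero_iff.mp hz)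
            · intro j; by_cases h : j.1 < i <;> simp [hwdef, h]
            · intro j; by_cases h : j.1 < i <;> simp [hwdef, h]
          have hw'b : w' ∈ B := by
            rw [hBdef, mem_ball_zero_iff]
            refine lt_of_le_of_lt (DNFI.normcomp (z := z) ?_ ?_) (mem_ball_zero_iff.mp hz)
            · intro j; by_cases h : j.1 < i <;> simp [hw'def, h]
            · intro j; by_cases h : j.1 < i + 1 <;> simp only [Nat.lt_add_one_iff] at h <;> simp [hw'def, h]
          have hw'zero : ∀ j : Fin n, j.1 < i → w'.1 j = 0 ∧ w'.2 j = 0 := by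
            intro j hj
            constructor <;> simp [hw'def, hj, Nat.lt_succ_of_lt hj, hj.le, Nat.not_lt.2 hj.le]
          have hΨw'zero : ∀ j : Fin n, j.1 < i → (Ψ w').1 j = 0 ∧ (Ψ w').2 j = 0 := by
            intro j hj
            obtain ⟨a, b⟩ := IH' w' hw'b j hj
            exact ⟨a.trans (hw'zero j hj).1, b.trans (hw'zero j hj).2⟩
          -- Qt i' vanishes at w'
          have hQtw' : Qt i' w' = 0 := by
            rw [hQdec w' hw'b i']
            refine Finset.sum_eq_zero fun j _ => ?_
            rcases Nat.lt_or_ge j.1 (2*i) with hj | hj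
            · rw [DNFI.genFun_zero (le_of_lt hi) hw'zero hj, mul_zero]
            · have hj2 : j.1 = 2*i'.1 := by have := j.2; omega
              have : genFun n j.1 w' = w'.2 i' := by rw [hj2, DNFI.genFun_eval_q]
              rw [this]
              have : w'.2 i' = 0 := by simp [hw'def, hival]
              rw [this, mul_zero]
          -- hence Qt' i' (Ψ w') = 0
          have hQt'Ψw' : Qt' i' (Ψ w') = 0 := by
            have := congrFun (congrArg Prod.snd (hconjb w' hw'b)) i'
            simp only at this
            rw [this, hQtw']
          -- expand to get (Ψ w').2 i' = 0
          have hΨw'q : (Ψ w').2 i' = 0 := by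
            have hexp : Qt' i' (Ψ w') =
                cQ' i' (Fin.last _) (Ψ w') * (Ψ w').2 i' := by
              rw [hQ'dec w' hw'b i']
              rw [Finset.sum_eq_single (Fin.last (2*i'.1))]
              · congr 1
                exact DNFI.genFun_eval_q i' (Ψ w')
              · intro j _ hjne
                have hj : j.1 < 2*i := by
                  have h2 := j.2
                  rcases Nat.lt_or_ge j.1 (2*i) with h | h
                  · exact h
                  · exact absurd (Fin.ext (by simp [Fin.val_last]; omega)) hjne
                rw [DNFI.genFun_zero (le_of_lt hi) hΨw'zero hj, mul_zero]
              · intro h; exact absurd (Finset.mem_univ _) h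
            have := hexp.symm.trans hQt'Ψw'
            exact (mul_eq_zero.mp this).resolve_left (hcne w' hw'b i')
          -- translate back: w = w' + (z.2 i') • eQ i'
          have hww' : w = w' + (z.2 i') • DNFI.eQ n i' := by
            refine Prod.ext (funext fun j => ?_) (funext fun j => ?_)
            · simp [hwdef, hw'def, DNFI.eQ]
            · by_cases h : j = i'
              · subst h
                simp [hwdef, hw'def, DNFI.eQ, Nat.lt_irrefl, hival]
              · have hji : j.1 ≠ i := fun hc => h (Fin.ext hc)
                have : (j.1 ≤ i) = (j.1 < i) := by
                  exact propext ⟨fun h1 => by omega, fun h1 => by omega⟩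
                simp [hwdef, hw'def, DNFI.eQ, Pi.single_apply, h, this]
          have hΨw : (Ψ w).2 i' = w.2 i' := by
            have htr : Ψ (w' + (z.2 i') • DNFI.eQ n i') = Ψ w' + (z.2 i') • DNFI.eQ n i' := by
              refine DNFI.translate hFb _ (fun u hu => ?_) hw'b (by rw [← hww']; exact hwb)
              rw [map_smul, hfixQ u hu]
            rw [hww', htr]
            have : (Ψ w' + (z.2 i') • DNFI.eQ n i').2 i' = (Ψ w').2 i' + z.2 i' := by
              simp [DNFI.eQ]
            rw [this, hΨw'q, zero_add]
            have : (w' + (z.2 i') • DNFI.eQ n i').2 i' = w'.2 i' + z.2 i' := by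
              simp [DNFI.eQ]
            rw [this]
            simp [hw'def, hwdef, hival]
          -- translate from w to z
          have hvz : ∀ j : Fin n, i ≤ j.1 → (z - w).1 j = 0 ∧ (z - w).2 j = 0 := by
            intro j hj
            constructor <;> simp [hwdef, Nat.not_lt.2 hj]
          have hΨzw : Ψ z = Ψ w + (z - w) := by
            have := htrans (z - w) hvz w hwb (by rw [add_sub_cancel]; exact hz)
            rwa [add_sub_cancel] at this
          have h1 : (Ψ z).2 i' = (Ψ w).2 i' + (z.2 i' - w.2 i') := by
            rw [hΨzw]; rfl
          rw [h1, hΨw]; ring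
        exact fun z hz => ⟨hP z hz, hQ z hz⟩
      intro z hz j hj
      rcases Nat.lt_or_ge j.1 i with h | h
      · exact IH' z hz j h
      · have : j = i' := Fin.ext (by omega)
        rw [this]
        exact main z hz
  -- conclude
  have hid : ∀ᶠ z in 𝓝 (0:PQ n), Ψ z = z := by
    filter_upwards [Metric.ball_mem_nhds (0:PQ n) hr] with z hz
    have := key n le_rfl z hz
    exact Prod.ext (funext fun j => (this j j.2).1) (funext fun j => (this j j.2).2)
  refine ⟨hid, fun i => ?_, fun i => ?_⟩
  · filter_upwards [hid, hconj] with z h1 h2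
    have := congrFun (congrArg Prod.snd h2) i
    simp only at this
    rw [h1] at this
    exact this.symm
  · filter_upwards [hid, hconj] with z h1 h2
    have := congrFun (congrArg Prod.fst h2) i
    simp only at this
    rw [h1] at this
    linarith
end
end

section
/- Let n ≥ 1 and let g(y,p,q) = r(y) + p₁ + Σᵢ₌₂ⁿ (pᵢ + P̃ᵢ(p,q))·y^{2i−2} + Σᵢ₌₁ⁿ Q̃ᵢ(p,q)·y^{2i−1} + φ(y,p,q)·y^{2n} and g′(y,p,q) = r′(y) + p₁ + Σᵢ₌₂ⁿ (pᵢ + P̃ᵢ′(p,q))·y^{2i−2} + Σᵢ₌₁ⁿ Q̃ᵢ′(p,q)·y^{2i−1} + φ′(y,p,q)·y^{2n} be two smooth germs at 0 ∈ ℝ^{2n+1} in normal form, i.e. r(0)=r′(0)=0, dr/dy(0) ≠ 0, dr′/dy(0) ≠ 0, φ(y,0,0)=φ′(y,0,0)=0, ∂Q̃ᵢ/∂qᵢ(0) ≠ 0 and ∂Q̃ᵢ′/∂qᵢ(0) ≠ 0 for i = 1,…,n, P̃ᵢ, P̃ᵢ′ ∈ I_{2i−2} for i = 2,…,n, and Q̃ᵢ,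 Q̃ᵢ′ ∈ I_{2i−1} for i = 1,…,n. If there exists a local symplectomorphism Ψ of ω₁ on ℝ^{2n+2} such that on a neighbourhood of 0 the second component of Ψ equals y (i.e. y∘Ψ = y) and (x² + g′(y,p,q))∘Ψ = x² + g(y,p,q), then r = r′, φ = φ′, P̃ᵢ = P̃ᵢ′ (i = 2,…,n) and Q̃ᵢ = Q̃ᵢ′ (i = 1,…,n) as germs at 0, i.e. the functions r, φ, P̃ᵢ, Q̃ᵢ are functional invariants of the normal form. -/
open Filter Topology

noncomputable section

/-- `ℝ^{2n+1}` with coordinates `(y, p, q)`. -/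
abbrev YPQ (n : ℕ) : Type := ℝ × PQ n

/-- `ℝ^{2n+2}` with coordinates `(x, y, p, q)`. -/
abbrev XYPQ (n : ℕ) : Type := ℝ × YPQ n

/-- The standard symplectic form `ω₁ = dx∧dy + Σᵢ dpᵢ∧dqᵢ` on `ℝ^{2n+2}`. -/
def omega1 (n : ℕ) (u v : XYPQ n) : ℝ :=
  u.1 * v.2.1 - u.2.1 * v.1 + omega0 n u.2.2 v.2.2

/-- A local symplectomorphism of `ω₁` on `ℝ^{2n+2}`. -/
def IsLocalSymp1 (n : ℕ) (Ψ : XYPQ n → XYPQ n) : Prop :=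
  Ψ 0 = 0 ∧ SmoothGerm Ψ ∧ Function.Bijective ⇑(fderiv ℝ Ψ 0) ∧
    ∀ᶠ z in 𝓝 (0 : XYPQ n), ∀ u v : XYPQ n,
      omega1 n (fderiv ℝ Ψ z u) (fderiv ℝ Ψ z v) = omega1 n u v

/-- The Poisson bracket of `ω₁` on `ℝ^{2n+2}`:
`{F,G} = ∂ₓF·∂_yG − ∂_yF·∂ₓG + Σᵢ (∂_{pᵢ}F·∂_{qᵢ}G − ∂_{qᵢ}F·∂_{pᵢ}G)`. -/
def pb1 (n : ℕ) (F G : XYPQ n → ℝ) (z : XYPQ n) : ℝ :=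
  fderiv ℝ F z ((1, 0) : XYPQ n) * fderiv ℝ G z ((0, 1, 0) : XYPQ n)
    - fderiv ℝ F z ((0, 1, 0) : XYPQ n) * fderiv ℝ G z ((1, 0) : XYPQ n)
    + ∑ i : Fin n,
      (fderiv ℝ F z ((0, 0, Pi.single i 1, 0) : XYPQ n)
          * fderiv ℝ G z ((0, 0, 0, Pi.single i 1) : XYPQ n)
        - fderiv ℝ F z ((0, 0, 0, Pi.single i 1) : XYPQ n)
          * fderiv ℝ G z ((0, 0, Pi.single i 1, 0) : XYPQ n))

/-- The singularity class `S₁`: first occurring singularities of pairs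
`(f, H = {h = 0})` in `(ℝ^{2n+2}, ω₁)`. -/
def InS1 (n : ℕ) (f h : XYPQ n → ℝ) : Prop :=
  SmoothGerm f ∧ SmoothGerm h ∧ f 0 = 0 ∧ h 0 = 0 ∧
    LinearIndependent ℝ ![fderiv ℝ f 0, fderiv ℝ h 0] ∧
    pb1 n f h 0 = 0 ∧ pb1 n f (pb1 n f h) 0 ≠ 0 ∧ pb1 n h (pb1 n f h) 0 ≠ 0

section Helpers

variable {n : ℕ}

lemma SmoothGerm.eventually_differentiableAt {E F : Type*} [NormedAddCommGroup E]
    [NormedSpace ℝ E] [NormedAddCommGroup F] [NormedSpace ℝ F] {f : E → F}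
    (h : SmoothGerm f) : ∀ᶠ z in 𝓝 (0 : E), DifferentiableAt ℝ f z := by
  obtain ⟨U, hU, hsm⟩ := h
  have hint : interior U ∈ 𝓝 (0 : E) := interior_mem_nhds.mpr hU
  filter_upwards [hint] with z hz
  exact ((hsm.contDiffAt (mem_interior_iff_mem_nhds.mp hz)).differentiableAt (by simp))

lemma SmoothGerm.eventually_continuousAt {E F : Type*} [NormedAddCommGroup E]
    [NormedSpace ℝ E] [NormedAddCommGroup F] [NormedSpace ℝ F] {f : E → F}
    (h : SmoothGerm f) : ∀ᶠ z in 𝓝 (0 : E), ContinuousAt f z := by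
  filter_upwards [h.eventually_differentiableAt] with z hz using hz.continuousAt

lemma omega0_sub_left (u v w : PQ n) :
    omega0 n (u - v) w = omega0 n u w - omega0 n v w := by
  simp only [omega0, ← Finset.sum_sub_distrib]
  refine Finset.sum_congr rfl fun i _ => ?_
  simp only [Prod.fst_sub, Prod.snd_sub, Pi.sub_apply]
  ring

lemma omega0_nondeg {u : PQ n} (h : ∀ v, omega0 n u v = 0) : u = 0 := by
  refine Prod.ext (funext fun i => ?_) (funext fun i => ?_)
  · have := h ((0, Pi.single i 1) : PQ n)
    simpa [omega0, Pi.single_apply, mul_ite, Finset.sum_ite_eq'] using this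
  · have := h ((Pi.single i 1, 0) : PQ n)
    simp only [omega0, Pi.single_apply] at this
    simp only [mul_ite, mul_one, mul_zero, ite_mul, one_mul, zero_mul, mul_comm] at this
    rw [Finset.sum_sub_distrib] at this
    simp [Finset.sum_ite_eq', neg_eq_zero] at this
    simpa using this

lemma omega1_nondeg {u : XYPQ n} (h : ∀ v, omega1 n u v = 0) : u = 0 := by
  have h1 : u.1 = 0 := by
    have := h ((0, 1, 0) : XYPQ n)
    simpa [omega1, omega0] using this
  have h2 : u.2.1 = 0 := by
    have := h ((1, 0) : XYPQ n)
    simpa [omega1, omega0] using this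
  have h3 : u.2.2 = 0 := by
    apply omega0_nondeg (n := n)
    intro v
    have := h ((0, 0, v) : XYPQ n)
    simpa [omega1] using this
  exact Prod.ext h1 (Prod.ext h2 h3)

/-- If the derivative of `f` in the fixed direction `v` is the constant `c` on a convex
set, then `f` is affine along lines in direction `v`. -/
lemma affine_of_fderiv_dir {E F : Type*} [NormedAddCommGroup E] [NormedSpace ℝ E]
    [NormedAddCommGroup F] [NormedSpace ℝ F]
    {f : E → F} {D : E → E →L[ℝ] F} {s : Set E} (hs : Convex ℝ s)
    (hd : ∀ z ∈ s, HasFDerivAt f (D z) z) {v : E} {c : F}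
    (hDc : ∀ z ∈ s, D z v = c) {a : E} {t : ℝ} (ha : a ∈ s) (hb : a + t • v ∈ s) :
    f (a + t • v) = f a + t • c := by
  set I : Set ℝ := (fun τ : ℝ => a + τ • v) ⁻¹' s with hIdef
  have hIc : Convex ℝ I := by
    intro τ₁ h1 τ₂ h2 lam mu hl hm hlm
    have hmem := hs h1 h2 hl hm hlm
    have heq : lam • (a + τ₁ • v) + mu • (a + τ₂ • v)
        = a + (lam * τ₁ + mu * τ₂) • v := by
      have h1 : lam • a + mu • a = a := Convex.combo_self hlm a
      calc lam • (a + τ₁ • v) + mu • (a + τ₂ • v)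
          = (lam • a + mu • a) + (lam * τ₁ + mu * τ₂) • v := by module
        _ = a + (lam * τ₁ + mu * τ₂) • v := by rw [h1]
    show a + (lam * τ₁ + mu * τ₂) • v ∈ s
    rw [← heq]; exact hmem
  have key : ∀ τ ∈ I, HasDerivWithinAt (fun τ : ℝ => f (a + τ • v) - τ • c) 0 I τ := by
    intro τ hτ
    have h1 : HasDerivAt (fun τ : ℝ => a + τ • v) v τ := by
      simpa using ((hasDerivAt_id τ).smul_const v).const_add a
    have h2 : HasDerivAt (fun τ : ℝ => f (a + τ • v)) (D (a + τ • v) v) τ :=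
      (hd _ hτ).comp_hasDerivAt τ h1
    have h3 : HasDerivAt (fun τ : ℝ => τ • c) c τ := by
      simpa using (hasDerivAt_id τ).smul_const c
    have h4 := h2.sub h3
    rw [hDc _ hτ, sub_self] at h4
    exact h4.hasDerivWithinAt
  have h0I : (0 : ℝ) ∈ I := by simpa [hIdef] using ha
  have htI : t ∈ I := by simpa [hIdef] using hb
  have hb2 := Convex.norm_image_sub_le_of_norm_hasDerivWithin_le (C := 0) key
    (fun x _ => by simp) hIc h0I htI
  have heq : f (a + t • v) - t • c - (f (a + (0:ℝ) • v) - (0:ℝ) • c) = 0 := by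
    rw [← norm_le_zero_iff]
    simpa using hb2
  have h5 := sub_eq_zero.mp heq
  simp only [zero_smul, add_zero, sub_zero] at h5
  exact sub_eq_iff_eq_add.mp h5

end Helpers

section Helpers2

variable {n : ℕ}

lemma symp_fix_dir {A : PQ n →L[ℝ] PQ n}
    (hsymp : ∀ u v, omega0 n (A u) (A v) = omega0 n u v)
    {ξ : PQ n} {θ : PQ n → ℝ}
    (hθA : ∀ v, θ (A v) = θ v) (hξ : ∀ u, omega0 n ξ u = θ u) : A ξ = ξ := by
  have hinj : Function.Injective A := by
    intro u u' huu
    have h0 : ∀ v, omega0 n (u - u') v = 0 := by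
      intro v
      have h1 := hsymp (u - u') v
      rw [map_sub, huu, sub_self] at h1
      rw [← h1]
      simp only [omega0, Prod.fst_zero, Prod.snd_zero, Pi.zero_apply, zero_mul,
        sub_zero, Finset.sum_const_zero]
    have := omega0_nondeg h0
    rwa [sub_eq_zero] at this
  have hsurj : Function.Surjective A :=
    (LinearMap.injective_iff_surjective (f := (A : PQ n →ₗ[ℝ] PQ n))).mp hinj
  have key : ∀ u, omega0 n (A ξ - ξ) u = 0 := by
    intro u
    obtain ⟨v, rfl⟩ := hsurj u
    rw [omega0_sub_left, hsymp ξ v, hξ, hξ, hθA, sub_self]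
  have := omega0_nondeg key
  rwa [sub_eq_zero] at this

lemma poly_coeff_zero {N : ℕ} {d : ℕ → ℝ} {ψ : ℝ → ℝ} {ε : ℝ} (hε : 0 < ε)
    (hψ : ContinuousAt ψ 0)
    (h : ∀ y : ℝ, |y| < ε → (∑ j ∈ Finset.range N, d j * y ^ j) + ψ y * y ^ N = 0) :
    (∀ j, j < N → d j = 0) ∧ ∀ y : ℝ, |y| < ε → ψ y = 0 := by
  have hball : ∀ᶠ y in 𝓝 (0:ℝ), |y| < ε := by
    filter_upwards [Metric.ball_mem_nhds (0:ℝ) hε] with y hy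
    simpa [Real.dist_eq] using hy
  have main : ∀ m, m ≤ N → (∀ j, j < m → d j = 0) ∧
      ∀ y : ℝ, y ≠ 0 → |y| < ε →
        (∑ j ∈ Finset.Ico m N, d j * y ^ (j - m)) + ψ y * y ^ (N - m) = 0 := by
    intro m
    induction m with
    | zero =>
      intro _
      refine ⟨fun j hj => absurd hj (Nat.not_lt_zero j), fun y _ hyε => ?_⟩
      have hh := h y hyε
      simp only [Nat.sub_zero, ← Finset.range_eq_Ico]
      exact hh
    | succ m ih =>
      intro hm
      obtain ⟨hd, hG⟩ := ih (Nat.le_of_succ_le hm)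
      have hmN : m < N := hm
      have hev : ∀ᶠ y in 𝓝[≠] (0:ℝ),
          (∑ j ∈ Finset.Ico m N, d j * y ^ (j - m)) + ψ y * y ^ (N - m) = 0 := by
        filter_upwards [hball.filter_mono nhdsWithin_le_nhds, self_mem_nhdsWithin]
          with y h1 h2
        exact hG y h2 h1
      have hlim : Filter.Tendsto
          (fun y : ℝ => (∑ j ∈ Finset.Ico m N, d j * y ^ (j - m)) + ψ y * y ^ (N - m))
          (𝓝[≠] (0:ℝ)) (𝓝 (d m)) := by
        have hc : Continuous fun y : ℝ => ∑ j ∈ Finset.Ico m N, d j * y ^ (j - m) :=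
          continuous_finset_sum _ fun j _ => continuous_const.mul (continuous_pow _)
        have hp : Filter.Tendsto (fun y : ℝ => ∑ j ∈ Finset.Ico m N, d j * y ^ (j - m))
            (𝓝 (0:ℝ)) (𝓝 (d m)) := by
          have h0 := hc.tendsto 0
          convert h0 using 2
          rw [Finset.sum_eq_single m]
          · simp
          · intro j hj hjm
            have hj0 : j - m ≠ 0 := by
              simp only [Finset.mem_Ico] at hj; omega
            simp [zero_pow hj0]
          · intro hmem
            exact absurd (Finset.mem_Ico.mpr ⟨le_refl m, hmN⟩) hmem
        have hq : Filter.Tendsto (fun y : ℝ => ψ y * y ^ (N - m)) (𝓝 (0:ℝ)) (𝓝 0) := by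
          have h2 : Filter.Tendsto (fun y : ℝ => y ^ (N - m)) (𝓝 (0:ℝ)) (𝓝 0) := by
            have h3 := (continuous_pow (N - m)).tendsto (0:ℝ)
            simpa [zero_pow (show N - m ≠ 0 by omega)] using h3
          simpa using hψ.tendsto.mul h2
        have h4 := hp.add hq
        simpa using h4.mono_left nhdsWithin_le_nhds
      have hdm : d m = 0 :=
        tendsto_nhds_unique (hlim.congr' hev) tendsto_const_nhds
      refine ⟨fun j hj => ?_, fun y hy hyε => ?_⟩
      · rcases Nat.lt_succ_iff_lt_or_eq.mp hj with hlt | heq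
        · exact hd j hlt
        · rw [heq]; exact hdm
      · have h1 := hG y hy hyε
        rw [Finset.sum_eq_sum_Ico_succ_bot hmN] at h1
        have hy' : ∀ j ∈ Finset.Ico (m+1) N, d j * y ^ (j - m) = y * (d j * y ^ (j - (m+1))) := by
          intro j hj
          simp only [Finset.mem_Ico] at hj
          have he : j - m = (j - (m+1)) + 1 := by omega
          rw [he, pow_succ]; ring
        rw [Finset.sum_congr rfl hy', ← Finset.mul_sum, hdm] at h1
        have hNm : N - m = (N - (m+1)) + 1 := by omega
        rw [hNm, pow_succ] at h1
        have h2 : y * ((∑ j ∈ Finset.Ico (m+1) N, d j * y ^ (j - (m+1))) + ψ y * y ^ (N - (m+1))) = 0 := by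
          linear_combination h1
        rcases mul_eq_zero.mp h2 with h3 | h3
        · exact absurd h3 hy
        · exact h3
  obtain ⟨hd, hlast⟩ := main N le_rfl
  refine ⟨hd, fun y hyε => ?_⟩
  by_cases hy : y = 0
  · subst hy
    have hev : ∀ᶠ y in 𝓝[≠] (0:ℝ), ψ y = 0 := by
      filter_upwards [hball.filter_mono nhdsWithin_le_nhds, self_mem_nhdsWithin] with y h1 h2
      simpa using hlast y h2 h1
    have hlim : Filter.Tendsto ψ (𝓝[≠] (0:ℝ)) (𝓝 (ψ 0)) :=
      hψ.tendsto.mono_left nhdsWithin_le_nhds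
    exact tendsto_nhds_unique (hlim.congr' hev) tendsto_const_nhds
  · simpa using hlast y hy hyε

lemma sum_range_two_mul (f : ℕ → ℝ) (k : ℕ) :
    ∑ j ∈ Finset.range (2 * k), f j = ∑ i ∈ Finset.range k, (f (2 * i) + f (2 * i + 1)) := by
  induction k with
  | zero => simp
  | succ k ih =>
    rw [Finset.sum_range_succ, ← ih, Nat.mul_succ,
      show 2 * k + 2 = (2 * k + 1) + 1 from rfl, Finset.sum_range_succ, Finset.sum_range_succ]
    ring

def genCLM (n j : ℕ) : PQ n →L[ℝ] ℝ :=
  if h : j / 2 < n then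
    (if j % 2 = 0 then (ContinuousLinearMap.proj (⟨j/2, h⟩ : Fin n)).comp
        (ContinuousLinearMap.snd ℝ (Fin n → ℝ) (Fin n → ℝ))
      else (ContinuousLinearMap.proj (⟨j/2, h⟩ : Fin n)).comp
        (ContinuousLinearMap.fst ℝ (Fin n → ℝ) (Fin n → ℝ)))
  else 0

lemma genCLM_apply (n j : ℕ) (z : PQ n) : genCLM n j z = genFun n j z := by
  unfold genCLM genFun
  split_ifs <;> simp

lemma genFun_zero (n j : ℕ) : genFun n j (0 : PQ n) = 0 := by
  unfold genFun
  split_ifs <;> simp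

lemma fderiv_ideal_rep {k : ℕ} {Q : PQ n → ℝ} {c : Fin k → PQ n → ℝ}
    (hc : ∀ j, SmoothGerm (c j))
    (hrep : ∀ᶠ z in 𝓝 (0 : PQ n), Q z = ∑ j : Fin k, c j z * genFun n j.1 z)
    (ξ : PQ n) : fderiv ℝ Q 0 ξ = ∑ j : Fin k, c j 0 * genFun n j.1 ξ := by
  have hterm : ∀ j : Fin k, HasFDerivAt (fun z => c j z * genFun n j.1 z)
      (c j 0 • genCLM n j.1) (0 : PQ n) := by
    intro j
    have hdc : DifferentiableAt ℝ (c j) 0 := (hc j).eventually_differentiableAt.self_of_nhds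
    have hg : HasFDerivAt (fun z : PQ n => genFun n j.1 z) (genCLM n j.1) (0 : PQ n) := by
      refine ((genCLM n j.1).hasFDerivAt (x := (0:PQ n))).congr_of_eventuallyEq ?_
      exact Filter.Eventually.of_forall fun z => (genCLM_apply n j.1 z).symm
    have hmul := hdc.hasFDerivAt.mul hg
    rw [genFun_zero, zero_smul, add_zero] at hmul
    exact hmul
  have hsum : HasFDerivAt (fun z : PQ n => ∑ j : Fin k, c j z * genFun n j.1 z)
      (∑ j : Fin k, c j 0 • genCLM n j.1) (0 : PQ n) :=
    HasFDerivAt.fun_sum fun j _ => hterm j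
  have hQ : HasFDerivAt Q (∑ j : Fin k, c j 0 • genCLM n j.1) (0 : PQ n) :=
    hsum.congr_of_eventuallyEq hrep
  rw [hQ.fderiv]
  simp [ContinuousLinearMap.sum_apply, genCLM_apply]

lemma pq_decomp (v : PQ n) :
    v = ∑ j : Fin n, (v.1 j • ((Pi.single j 1, 0) : PQ n)
      + v.2 j • ((0, Pi.single j 1) : PQ n)) := by
  have e1 : ∀ w : Fin n → ℝ, ∑ j : Fin n, w j • (Pi.single j (1:ℝ) : Fin n → ℝ) = w := by
    intro w
    have h0 : ∀ j : Fin n, w j • (Pi.single j (1:ℝ) : Fin n → ℝ)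
        = (Pi.single j (w j) : Fin n → ℝ) := by
      intro j
      funext m
      simp [Pi.single_apply]
    rw [Finset.sum_congr rfl fun j _ => h0 j]
    exact Finset.univ_sum_single w
  refine Prod.ext ?_ ?_
  · rw [Prod.fst_sum]
    simp only [Prod.smul_mk, Prod.fst_add, smul_zero, Prod.mk_add_mk, add_zero, zero_add]
    rw [Finset.sum_congr rfl (fun j _ => rfl)]
    simpa using (e1 v.1).symm
  · rw [Prod.snd_sum]
    simp only [Prod.smul_mk, Prod.snd_add, smul_zero, Prod.mk_add_mk, add_zero, zero_add]
    simpa using (e1 v.2).symm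

lemma pq_comp_fst_le (w : PQ n) (i : Fin n) : |w.1 i| ≤ ‖w‖ :=
  le_trans (by simpa using norm_le_pi_norm w.1 i) (norm_fst_le w)

lemma pq_comp_snd_le (w : PQ n) (i : Fin n) : |w.2 i| ≤ ‖w‖ :=
  le_trans (by simpa using norm_le_pi_norm w.2 i) (norm_snd_le w)

lemma pq_norm_le {u : PQ n} {r : ℝ} (hr : 0 ≤ r)
    (h1 : ∀ i, |u.1 i| ≤ r) (h2 : ∀ i, |u.2 i| ≤ r) : ‖u‖ ≤ r := by
  rw [Prod.norm_def]
  refine max_le ?_ ?_ <;> rw [pi_norm_le_iff_of_nonneg hr] <;> intro i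
  · simpa using h1 i
  · simpa using h2 i

end Helpers2

section Helpers3

variable {n : ℕ}

lemma dite_interleave_even (E F : Fin n → ℝ) (i : Fin n) :
    (if h : (2*i.1) / 2 < n then
      (if (2*i.1) % 2 = 0 then E ⟨(2*i.1)/2, h⟩ else F ⟨(2*i.1)/2, h⟩) else 0) = E i := by
  have h1 : (2*i.1)/2 = i.1 := by omega
  have h2 : (2*i.1) % 2 = 0 := by omega
  simp only [h1, h2, if_pos rfl]
  rw [dif_pos i.isLt]
  simp

lemma dite_interleave_odd (E F : Fin n → ℝ) (i : Fin n) :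
    (if h : (2*i.1+1) / 2 < n then
      (if (2*i.1+1) % 2 = 0 then E ⟨(2*i.1+1)/2, h⟩ else F ⟨(2*i.1+1)/2, h⟩) else 0) = F i := by
  have h1 : (2*i.1+1)/2 = i.1 := by omega
  have h2 : (2*i.1+1) % 2 = 1 := by omega
  simp only [h1, h2]
  rw [dif_pos i.isLt]
  simp

lemma sum_interleave (n : ℕ) (E F : Fin n → ℝ) (y : ℝ) :
    ∑ j ∈ Finset.range (2*n),
      (if h : j / 2 < n then (if j % 2 = 0 then E ⟨j/2, h⟩ else F ⟨j/2, h⟩) else 0) * y ^ j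
      = ∑ i : Fin n, (E i * y^(2*i.1) + F i * y^(2*i.1+1)) := by
  rw [sum_range_two_mul]
  rw [← Fin.sum_univ_eq_sum_range (fun m =>
    (if h : (2*m) / 2 < n then (if (2*m) % 2 = 0 then E ⟨(2*m)/2, h⟩ else F ⟨(2*m)/2, h⟩) else 0) * y ^ (2*m)
    + (if h : (2*m+1) / 2 < n then (if (2*m+1) % 2 = 0 then E ⟨(2*m+1)/2, h⟩ else F ⟨(2*m+1)/2, h⟩) else 0) * y ^ (2*m+1))]
  refine Finset.sum_congr rfl fun i _ => ?_
  rw [dite_interleave_even E F i, dite_interleave_odd E F i]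

lemma omega0_single_q (j : Fin n) (u : PQ n) :
    omega0 n ((0, Pi.single j 1) : PQ n) u = -(u.1 j) := by
  simp only [omega0, Pi.single_apply, Pi.zero_apply, zero_mul, zero_sub, ite_mul, one_mul]
  rw [Finset.sum_neg_distrib, Finset.sum_ite_eq' Finset.univ j (fun m => u.1 m)]
  simp

lemma omega0_single_p (j : Fin n) (u : PQ n) :
    omega0 n ((Pi.single j 1, 0) : PQ n) u = u.2 j := by
  simp only [omega0, Pi.single_apply, Pi.zero_apply, zero_mul, sub_zero, ite_mul, one_mul]
  rw [Finset.sum_ite_eq' Finset.univ j (fun m => u.2 m)]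
  simp

lemma phi0_eq_id (Pt Qt Pt' Qt' : Fin n → (PQ n → ℝ)) (Φ0 : PQ n → PQ n)
    (hΦ00 : Φ0 0 = 0)
    (hdiff : ∀ᶠ pq in 𝓝 (0:PQ n), DifferentiableAt ℝ Φ0 pq)
    (hsymp : ∀ᶠ pq in 𝓝 (0:PQ n), ∀ u v : PQ n,
      omega0 n (fderiv ℝ Φ0 pq u) (fderiv ℝ Φ0 pq v) = omega0 n u v)
    (hPI : ∀ i : Fin n, InIdeal n (2 * i.1) (Pt i))
    (hQI : ∀ i : Fin n, InIdeal n (2 * i.1 + 1) (Qt i))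
    (hPI' : ∀ i : Fin n, InIdeal n (2 * i.1) (Pt' i))
    (hQI' : ∀ i : Fin n, InIdeal n (2 * i.1 + 1) (Qt' i))
    (hQsm' : ∀ i, SmoothGerm (Qt' i))
    (hQd' : ∀ i : Fin n, fderiv ℝ (Qt' i) 0 ((0, Pi.single i 1) : PQ n) ≠ 0)
    (hA : ∀ᶠ pq in 𝓝 (0:PQ n), ∀ i : Fin n,
      (Φ0 pq).1 i + Pt' i (Φ0 pq) = pq.1 i + Pt i pq)
    (hB : ∀ᶠ pq in 𝓝 (0:PQ n), ∀ i : Fin n, Qt i pq = Qt' i (Φ0 pq)) :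

    ∀ᶠ pq in 𝓝 (0 : PQ n), Φ0 pq = pq := by
  classical
  choose cP hcPs hcPrep using hPI
  choose cQ hcQs hcQrep using hQI
  choose cP' hcPs' hcPrep' using hPI'
  choose cQ' hcQs' hcQrep' using hQI'
  -- the last coefficient of Qt' i is nonzero at 0
  have hclast : ∀ i : Fin n, cQ' i (Fin.last (2*i.1)) 0 ≠ 0 := by
    intro i
    have h1 := fderiv_ideal_rep (hcQs' i) (hcQrep' i) ((0, Pi.single i 1) : PQ n)
    have h2 : ∑ j : Fin (2*i.1+1), cQ' i j 0 * genFun n j.1 ((0, Pi.single i 1) : PQ n)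
        = cQ' i (Fin.last (2*i.1)) 0 := by
      rw [Fin.sum_univ_castSucc]
      have hz : ∀ j : Fin (2*i.1),
          genFun n (Fin.castSucc j).1 ((0, Pi.single i 1) : PQ n) = 0 := by
        intro j
        have hj : j.1 < 2*i.1 := j.isLt
        have hjn : (Fin.castSucc j).1/2 < n := by
          have h5 := i.isLt
          have h6 : (Fin.castSucc j).1 = j.1 := rfl
          omega
        unfold genFun
        rw [dif_pos hjn]
        have hji : (Fin.castSucc j).1/2 < i.1 := by
          have h6 : (Fin.castSucc j).1 = j.1 := rfl
          omega
        split_ifs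
        · show (Pi.single i 1 : Fin n → ℝ) ⟨(Fin.castSucc j).1/2, hjn⟩ = 0
          rw [Pi.single_apply, if_neg]
          intro hEq
          have h7 : (Fin.castSucc j).1/2 = i.1 := congrArg Fin.val hEq
          omega
        · rfl
      rw [Finset.sum_congr rfl (fun j _ => by rw [hz j, mul_zero])]
      have hlast1 : genFun n (Fin.last (2*i.1)).1 ((0, Pi.single i 1) : PQ n) = 1 := by
        have hval : (Fin.last (2*i.1)).1 = 2*i.1 := rfl
        rw [hval]
        unfold genFun
        have h1n : (2*i.1)/2 < n := by have := i.isLt; omega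
        rw [dif_pos h1n, if_pos (by omega : (2*i.1) % 2 = 0)]
        show (Pi.single i 1 : Fin n → ℝ) ⟨(2*i.1)/2, h1n⟩ = 1
        have h3 : (⟨(2*i.1)/2, h1n⟩ : Fin n) = i := by
          apply Fin.ext
          show (2*i.1)/2 = i.1
          omega
        rw [h3, Pi.single_eq_same]
      rw [hlast1, mul_one]
      simp
    rw [h2] at h1
    rw [← h1]
    exact hQd' i
  have hΦ0cont0 : ContinuousAt Φ0 0 := (hdiff.self_of_nhds).continuousAt
  have hΦ0t : Filter.Tendsto Φ0 (𝓝 0) (𝓝 (0:PQ n)) := by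
    have h0 := hΦ0cont0.tendsto
    rwa [hΦ00] at h0
  have hcne : ∀ᶠ pq in 𝓝 (0:PQ n), ∀ i : Fin n, cQ' i (Fin.last (2*i.1)) (Φ0 pq) ≠ 0 := by
    rw [Filter.eventually_all]
    intro i
    have hc : ContinuousAt (cQ' i (Fin.last (2*i.1))) 0 :=
      ((hcQs' i _).eventually_continuousAt).self_of_nhds
    exact hΦ0t.eventually (hc.eventually_ne (hclast i))
  have hPrep : ∀ᶠ pq in 𝓝 (0:PQ n), ∀ i : Fin n,
      Pt i pq = ∑ j : Fin (2*i.1), cP i j pq * genFun n j.1 pq := by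
    rw [Filter.eventually_all]; exact fun i => hcPrep i
  have hQrep : ∀ᶠ pq in 𝓝 (0:PQ n), ∀ i : Fin n,
      Qt i pq = ∑ j : Fin (2*i.1+1), cQ i j pq * genFun n j.1 pq := by
    rw [Filter.eventually_all]; exact fun i => hcQrep i
  have hPrep' : ∀ᶠ pq in 𝓝 (0:PQ n), ∀ i : Fin n,
      Pt' i (Φ0 pq) = ∑ j : Fin (2*i.1), cP' i j (Φ0 pq) * genFun n j.1 (Φ0 pq) := by
    rw [Filter.eventually_all]
    intro i
    exact hΦ0t.eventually (hcPrep' i)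
  have hQrep' : ∀ᶠ pq in 𝓝 (0:PQ n), ∀ i : Fin n,
      Qt' i (Φ0 pq) = ∑ j : Fin (2*i.1+1), cQ' i j (Φ0 pq) * genFun n j.1 (Φ0 pq) := by
    rw [Filter.eventually_all]
    intro i
    exact hΦ0t.eventually (hcQrep' i)
  have hgrand := hdiff.and (hsymp.and (hA.and (hB.and (hPrep.and (hQrep.and
    (hPrep'.and (hQrep'.and hcne)))))))
  -- directional fixing lemmas
  have hfixdirQdir : ∀ (s : Set (PQ n)), IsOpen s →
      (∀ pq ∈ s, DifferentiableAt ℝ Φ0 pq) →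
      (∀ pq ∈ s, ∀ u v : PQ n,
        omega0 n (fderiv ℝ Φ0 pq u) (fderiv ℝ Φ0 pq v) = omega0 n u v) →
      ∀ j : Fin n, (∀ pq ∈ s, (Φ0 pq).1 j = pq.1 j) →
      ∀ pq ∈ s, fderiv ℝ Φ0 pq ((0, Pi.single j 1) : PQ n)
        = ((0, Pi.single j 1) : PQ n) := by
    intro s hso hsd hss j hcomp pq hpq
    set π : PQ n →L[ℝ] ℝ :=
      (ContinuousLinearMap.proj j).comp
        (ContinuousLinearMap.fst ℝ (Fin n → ℝ) (Fin n → ℝ)) with hπd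
    have h1 : HasFDerivAt (fun w : PQ n => π (Φ0 w)) (π.comp (fderiv ℝ Φ0 pq)) pq :=
      π.hasFDerivAt.comp pq (hsd pq hpq).hasFDerivAt
    have h2 : HasFDerivAt (fun w : PQ n => w.1 j) (π.comp (fderiv ℝ Φ0 pq)) pq := by
      refine h1.congr_of_eventuallyEq ?_
      filter_upwards [hso.mem_nhds hpq] with z hz
      exact (hcomp z hz).symm
    have h3 : π.comp (fderiv ℝ Φ0 pq) = π := h2.unique π.hasFDerivAt
    refine symp_fix_dir (hss pq hpq) (θ := fun u : PQ n => -(u.1 j)) ?_ ?_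
    · intro v
      have h4 := congrArg (fun L : PQ n →L[ℝ] ℝ => L v) h3
      simp only [ContinuousLinearMap.comp_apply] at h4
      exact congrArg (fun t : ℝ => -t) h4
    · intro u
      exact omega0_single_q j u
  have hfixdirPdir : ∀ (s : Set (PQ n)), IsOpen s →
      (∀ pq ∈ s, DifferentiableAt ℝ Φ0 pq) →
      (∀ pq ∈ s, ∀ u v : PQ n,
        omega0 n (fderiv ℝ Φ0 pq u) (fderiv ℝ Φ0 pq v) = omega0 n u v) →
      ∀ j : Fin n, (∀ pq ∈ s, (Φ0 pq).2 j = pq.2 j) →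
      ∀ pq ∈ s, fderiv ℝ Φ0 pq ((Pi.single j 1, 0) : PQ n)
        = ((Pi.single j 1, 0) : PQ n) := by
    intro s hso hsd hss j hcomp pq hpq
    set π : PQ n →L[ℝ] ℝ :=
      (ContinuousLinearMap.proj j).comp
        (ContinuousLinearMap.snd ℝ (Fin n → ℝ) (Fin n → ℝ)) with hπd
    have h1 : HasFDerivAt (fun w : PQ n => π (Φ0 w)) (π.comp (fderiv ℝ Φ0 pq)) pq :=
      π.hasFDerivAt.comp pq (hsd pq hpq).hasFDerivAt
    have h2 : HasFDerivAt (fun w : PQ n => w.2 j) (π.comp (fderiv ℝ Φ0 pq)) pq := by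
      refine h1.congr_of_eventuallyEq ?_
      filter_upwards [hso.mem_nhds hpq] with z hz
      exact (hcomp z hz).symm
    have h3 : π.comp (fderiv ℝ Φ0 pq) = π := h2.unique π.hasFDerivAt
    refine symp_fix_dir (hss pq hpq) (θ := fun u : PQ n => u.2 j) ?_ ?_
    · intro v
      have h4 := congrArg (fun L : PQ n →L[ℝ] ℝ => L v) h3
      simp only [ContinuousLinearMap.comp_apply] at h4
      exact h4
    · intro u
      exact omega0_single_p j u
  -- linear-span fixing
  have hDspan : ∀ (pq : PQ n) (w : PQ n),
      (∀ i : Fin n, w.1 i = 0 ∨ fderiv ℝ Φ0 pq ((Pi.single i 1, 0) : PQ n)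
        = ((Pi.single i 1, 0) : PQ n)) →
      (∀ i : Fin n, w.2 i = 0 ∨ fderiv ℝ Φ0 pq ((0, Pi.single i 1) : PQ n)
        = ((0, Pi.single i 1) : PQ n)) →
      fderiv ℝ Φ0 pq w = w := by
    intro pq w h1 h2
    conv_lhs => rw [pq_decomp w]
    rw [map_sum]
    conv_rhs => rw [pq_decomp w]
    refine Finset.sum_congr rfl fun j _ => ?_
    rw [map_add, map_smul, map_smul]
    congr 1
    · rcases h1 j with h | h
      · rw [h]; simp
      · rw [h]
    · rcases h2 j with h | h
      · rw [h]; simp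
      · rw [h]
  -- the main induction
  have main : ∀ m : ℕ, m ≤ n → ∀ᶠ pq in 𝓝 (0:PQ n),
      ∀ j : Fin n, j.1 < m → (Φ0 pq).1 j = pq.1 j ∧ (Φ0 pq).2 j = pq.2 j := by
    intro m
    induction m with
    | zero =>
      intro _
      exact Filter.Eventually.of_forall (fun pq j hj => absurd hj (Nat.not_lt_zero _))
    | succ k ih =>
      intro hk
      have hkn : k < n := hk
      have hIH := ih (Nat.le_of_succ_le hk)
      obtain ⟨V, hVP, hVo, hV0⟩ := eventually_nhds_iff.mp (hgrand.and hIH)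
      have hdiffV : ∀ pq ∈ V, DifferentiableAt ℝ Φ0 pq := fun pq h => (hVP pq h).1.1
      have hsympV : ∀ pq ∈ V, ∀ u v : PQ n,
          omega0 n (fderiv ℝ Φ0 pq u) (fderiv ℝ Φ0 pq v) = omega0 n u v :=
        fun pq h => (hVP pq h).1.2.1
      have hfixearly : ∀ j : Fin n, j.1 < k → ∀ pq ∈ V,
          fderiv ℝ Φ0 pq ((0, Pi.single j 1) : PQ n) = ((0, Pi.single j 1) : PQ n) ∧
          fderiv ℝ Φ0 pq ((Pi.single j 1, 0) : PQ n) = ((Pi.single j 1, 0) : PQ n) := by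
        intro j hj pq hpq
        constructor
        · exact hfixdirQdir V hVo hdiffV hsympV j
            (fun z hz => ((hVP z hz).2 j hj).1) pq hpq
        · exact hfixdirPdir V hVo hdiffV hsympV j
            (fun z hz => ((hVP z hz).2 j hj).2) pq hpq
      obtain ⟨δ, hδpos, hδV⟩ := Metric.isOpen_iff.mp hVo 0 hV0
      have hBδo : IsOpen (Metric.ball (0:PQ n) δ) := Metric.isOpen_ball
      have hmem : ∀ z : PQ n, z ∈ Metric.ball (0:PQ n) δ ↔ ‖z‖ < δ := by
        intro z
        rw [Metric.mem_ball, dist_zero_right]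
      -- (a) the k-th p-component is preserved on the δ-ball
      have hPk : ∀ w ∈ Metric.ball (0:PQ n) δ, (Φ0 w).1 ⟨k, hkn⟩ = w.1 ⟨k, hkn⟩ := by
        intro w hw
        have hwδ : ‖w‖ < δ := (hmem w).mp hw
        set u : PQ n := ((fun i => if i.1 < k then 0 else w.1 i),
          (fun i => if i.1 < k then 0 else w.2 i)) with hu
        have huδ : ‖u‖ ≤ ‖w‖ := by
          refine pq_norm_le (norm_nonneg w) ?_ ?_ <;> intro i
          · show |if i.1 < k then 0 else w.1 i| ≤ ‖w‖
            split_ifs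
            · simpa using norm_nonneg w
            · exact pq_comp_fst_le w i
          · show |if i.1 < k then 0 else w.2 i| ≤ ‖w‖
            split_ifs
            · simpa using norm_nonneg w
            · exact pq_comp_snd_le w i
        have huB : u ∈ Metric.ball (0:PQ n) δ := by
          rw [hmem]
          exact lt_of_le_of_lt huδ hwδ
        have hvfix : ∀ pq ∈ Metric.ball (0:PQ n) δ, fderiv ℝ Φ0 pq (w - u) = w - u := by
          intro pq hpq
          refine hDspan pq (w - u) ?_ ?_ <;> intro i
          · by_cases hik : i.1 < k
            · exact Or.inr (hfixearly i hik pq (hδV hpq)).2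
            · refine Or.inl ?_
              show w.1 i - (if i.1 < k then 0 else w.1 i) = 0
              rw [if_neg hik, sub_self]
          · by_cases hik : i.1 < k
            · exact Or.inr (hfixearly i hik pq (hδV hpq)).1
            · refine Or.inl ?_
              show w.2 i - (if i.1 < k then 0 else w.2 i) = 0
              rw [if_neg hik, sub_self]
        have hwu : w + (-1:ℝ) • (w - u) = u := by module
        have haff := affine_of_fderiv_dir (f := Φ0) (D := fun z => fderiv ℝ Φ0 z)
          (convex_ball 0 δ) (fun z hz => (hdiffV z (hδV hz)).hasFDerivAt)
          (v := w - u) (c := w - u) hvfix (a := w) (t := (-1:ℝ)) hw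
          (by rw [hwu]; exact huB)
        rw [hwu] at haff
        -- haff : Φ0 u = Φ0 w + (-1) • (w - u)
        have huV : u ∈ V := hδV huB
        obtain ⟨⟨hud, husymp, huA, huB', huPrep, huQrep, huPrep', huQrep', hucne⟩, huIH⟩ :=
          hVP u huV
        have hPtu : Pt ⟨k,hkn⟩ u = 0 := by
          rw [huPrep ⟨k,hkn⟩]
          apply Finset.sum_eq_zero
          intro j _
          have hj2 : j.1 < 2*k := j.isLt
          have hjn : j.1/2 < n := by omega
          have hgz : genFun n j.1 u = 0 := by
            unfold genFun
            rw [dif_pos hjn]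
            have hjk : j.1/2 < k := by omega
            split_ifs
            · show (if (⟨j.1/2, hjn⟩ : Fin n).1 < k then (0:ℝ) else w.2 ⟨j.1/2, hjn⟩) = 0
              rw [if_pos hjk]
            · show (if (⟨j.1/2, hjn⟩ : Fin n).1 < k then (0:ℝ) else w.1 ⟨j.1/2, hjn⟩) = 0
              rw [if_pos hjk]
          rw [hgz, mul_zero]
        have huearly : ∀ j : Fin n, j.1 < k →
            (Φ0 u).1 j = 0 ∧ (Φ0 u).2 j = 0 := by
          intro j hj
          obtain ⟨e1, e2⟩ := huIH j hj
          constructor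
          · rw [e1]; show (if j.1 < k then (0:ℝ) else w.1 j) = 0; rw [if_pos hj]
          · rw [e2]; show (if j.1 < k then (0:ℝ) else w.2 j) = 0; rw [if_pos hj]
        have hPtu' : Pt' ⟨k,hkn⟩ (Φ0 u) = 0 := by
          rw [huPrep' ⟨k,hkn⟩]
          apply Finset.sum_eq_zero
          intro j _
          have hj2 : j.1 < 2*k := j.isLt
          have hjn : j.1/2 < n := by omega
          have hjk : j.1/2 < k := by omega
          have hgz : genFun n j.1 (Φ0 u) = 0 := by
            unfold genFun
            rw [dif_pos hjn]
            split_ifs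
            · exact (huearly ⟨j.1/2, hjn⟩ hjk).2
            · exact (huearly ⟨j.1/2, hjn⟩ hjk).1
          rw [hgz, mul_zero]
        have hAu := huA ⟨k,hkn⟩
        rw [hPtu, hPtu'] at hAu
        -- hAu : (Φ0 u).1 ⟨k⟩ + 0 = u.1 ⟨k⟩ + 0
        have hu1k : u.1 ⟨k,hkn⟩ = w.1 ⟨k,hkn⟩ := by
          show (if k < k then (0:ℝ) else w.1 ⟨k,hkn⟩) = w.1 ⟨k,hkn⟩
          rw [if_neg (lt_irrefl k)]
        have hΦuk : (Φ0 u).1 ⟨k,hkn⟩ = (Φ0 w).1 ⟨k,hkn⟩ := by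
          rw [haff]
          show (Φ0 w).1 ⟨k,hkn⟩ + (-1:ℝ) * (w.1 ⟨k,hkn⟩ - u.1 ⟨k,hkn⟩) = _
          rw [hu1k]
          ring
        rw [hΦuk, hu1k] at hAu
        linarith [hAu]
      -- derivative now also fixes the k-th q-direction
      have hQfixdir : ∀ pq ∈ Metric.ball (0:PQ n) δ,
          fderiv ℝ Φ0 pq ((0, Pi.single (⟨k,hkn⟩ : Fin n) 1) : PQ n)
            = ((0, Pi.single (⟨k,hkn⟩ : Fin n) 1) : PQ n) :=
        hfixdirQdir (Metric.ball (0:PQ n) δ) hBδo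
          (fun z hz => hdiffV z (hδV hz)) (fun z hz => hsympV z (hδV hz))
          ⟨k,hkn⟩ hPk
      -- (b) the k-th q-component is preserved
      have hQk : ∀ w ∈ Metric.ball (0:PQ n) δ, (Φ0 w).2 ⟨k, hkn⟩ = w.2 ⟨k, hkn⟩ := by
        intro w hw
        have hwδ : ‖w‖ < δ := (hmem w).mp hw
        set u : PQ n := ((fun i => if i.1 < k then 0 else w.1 i),
          (fun i => if i.1 ≤ k then 0 else w.2 i)) with hu
        have huδ : ‖u‖ ≤ ‖w‖ := by
          refine pq_norm_le (norm_nonneg w) ?_ ?_ <;> intro i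
          · show |if i.1 < k then 0 else w.1 i| ≤ ‖w‖
            split_ifs
            · simpa using norm_nonneg w
            · exact pq_comp_fst_le w i
          · show |if i.1 ≤ k then 0 else w.2 i| ≤ ‖w‖
            split_ifs
            · simpa using norm_nonneg w
            · exact pq_comp_snd_le w i
        have huB : u ∈ Metric.ball (0:PQ n) δ := by
          rw [hmem]
          exact lt_of_le_of_lt huδ hwδ
        have hvfix : ∀ pq ∈ Metric.ball (0:PQ n) δ, fderiv ℝ Φ0 pq (w - u) = w - u := by
          intro pq hpq
          refine hDspan pq (w - u) ?_ ?_ <;> intro i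
          · by_cases hik : i.1 < k
            · exact Or.inr (hfixearly i hik pq (hδV hpq)).2
            · refine Or.inl ?_
              show w.1 i - (if i.1 < k then 0 else w.1 i) = 0
              rw [if_neg hik, sub_self]
          · by_cases hik : i.1 ≤ k
            · rcases Nat.lt_or_ge i.1 k with h5 | h5
              · exact Or.inr (hfixearly i h5 pq (hδV hpq)).1
              · have hik2 : i = (⟨k,hkn⟩ : Fin n) := Fin.ext (le_antisymm hik h5)
                rw [hik2]
                exact Or.inr (hQfixdir pq hpq)
            · refine Or.inl ?_
              show w.2 i - (if i.1 ≤ k then 0 else w.2 i) = 0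
              rw [if_neg hik, sub_self]
        have hwu : w + (-1:ℝ) • (w - u) = u := by module
        have haff := affine_of_fderiv_dir (f := Φ0) (D := fun z => fderiv ℝ Φ0 z)
          (convex_ball 0 δ) (fun z hz => (hdiffV z (hδV hz)).hasFDerivAt)
          (v := w - u) (c := w - u) hvfix (a := w) (t := (-1:ℝ)) hw
          (by rw [hwu]; exact huB)
        rw [hwu] at haff
        have huV : u ∈ V := hδV huB
        obtain ⟨⟨hud, husymp, huA, huB', huPrep, huQrep, huPrep', huQrep', hucne⟩, huIH⟩ :=
          hVP u huV
        have hQtu : Qt ⟨k,hkn⟩ u = 0 := by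
          rw [huQrep ⟨k,hkn⟩]
          apply Finset.sum_eq_zero
          intro j _
          have hj2 : j.1 < 2*k+1 := j.isLt
          have hjn : j.1/2 < n := by omega
          have hjk : j.1/2 ≤ k := by omega
          have hgz : genFun n j.1 u = 0 := by
            unfold genFun
            rw [dif_pos hjn]
            split_ifs
            · show (if (⟨j.1/2, hjn⟩ : Fin n).1 ≤ k then (0:ℝ) else w.2 ⟨j.1/2, hjn⟩) = 0
              rw [if_pos hjk]
            · show (if (⟨j.1/2, hjn⟩ : Fin n).1 < k then (0:ℝ) else w.1 ⟨j.1/2, hjn⟩) = 0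
              rw [if_pos (by omega : j.1/2 < k)]
          rw [hgz, mul_zero]
        have huearly : ∀ j : Fin n, j.1 < k →
            (Φ0 u).1 j = 0 ∧ (Φ0 u).2 j = 0 := by
          intro j hj
          obtain ⟨e1, e2⟩ := huIH j hj
          constructor
          · rw [e1]; show (if j.1 < k then (0:ℝ) else w.1 j) = 0; rw [if_pos hj]
          · rw [e2]; show (if j.1 ≤ k then (0:ℝ) else w.2 j) = 0
            rw [if_pos (le_of_lt hj)]
        -- Qt' k (Φ0 u) reduces to the last term
        have hQtu' : cQ' ⟨k,hkn⟩ (Fin.last (2*k)) (Φ0 u) * (Φ0 u).2 ⟨k,hkn⟩ = 0 := by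
          have h6 := huB' ⟨k,hkn⟩
          rw [hQtu] at h6
          rw [huQrep' ⟨k,hkn⟩] at h6
          rw [Fin.sum_univ_castSucc] at h6
          have hz : ∀ j : Fin (2*k),
              genFun n ((Fin.castSucc j).1) (Φ0 u) = 0 := by
            intro j
            have hj2 : (Fin.castSucc j).1 < 2*k := j.isLt
            have hjn : (Fin.castSucc j).1/2 < n := by omega
            have hjk : (Fin.castSucc j).1/2 < k := by omega
            unfold genFun
            rw [dif_pos hjn]
            split_ifs
            · exact (huearly ⟨(Fin.castSucc j).1/2, hjn⟩ hjk).2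
            · exact (huearly ⟨(Fin.castSucc j).1/2, hjn⟩ hjk).1
          rw [Finset.sum_congr rfl (fun j _ => by rw [hz j, mul_zero])] at h6
          have hlastg : genFun n ((Fin.last (2*k)).1) (Φ0 u) = (Φ0 u).2 ⟨k,hkn⟩ := by
            have hval : (Fin.last (2*k)).1 = 2*k := rfl
            rw [hval]
            unfold genFun
            have h1n : (2*k)/2 < n := by omega
            rw [dif_pos h1n, if_pos (by omega : (2*k) % 2 = 0)]
            have h8 : (⟨(2*k)/2, h1n⟩ : Fin n) = ⟨k, hkn⟩ :=
              Fin.ext (by show (2*k)/2 = k; omega)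
            rw [h8]
          rw [hlastg] at h6
          simp only [Finset.sum_const_zero, zero_add] at h6
          exact h6.symm
        have hΦu2k : (Φ0 u).2 ⟨k,hkn⟩ = 0 := by
          rcases mul_eq_zero.mp hQtu' with h7 | h7
          · exact absurd h7 (hucne ⟨k,hkn⟩)
          · exact h7
        have hu2k : u.2 ⟨k,hkn⟩ = 0 := by
          show (if k ≤ k then (0:ℝ) else w.2 ⟨k,hkn⟩) = 0
          rw [if_pos (le_refl k)]
        have hΦuk : (Φ0 u).2 ⟨k,hkn⟩ = (Φ0 w).2 ⟨k,hkn⟩ - w.2 ⟨k,hkn⟩ := by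
          rw [haff]
          show (Φ0 w).2 ⟨k,hkn⟩ + (-1:ℝ) * (w.2 ⟨k,hkn⟩ - u.2 ⟨k,hkn⟩) = _
          rw [hu2k]
          ring
        rw [hΦuk] at hΦu2k
        linarith [hΦu2k]
      have hBδev : ∀ᶠ pq in 𝓝 (0:PQ n), pq ∈ Metric.ball (0:PQ n) δ :=
        hBδo.mem_nhds (Metric.mem_ball_self hδpos)
      filter_upwards [hBδev, hIH] with pq h1 h2
      intro j hj
      rcases Nat.lt_succ_iff_lt_or_eq.mp hj with h | h
      · exact h2 j h
      · have hjk : j = (⟨k, hkn⟩ : Fin n) := Fin.ext h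
        rw [hjk]
        exact ⟨hPk pq h1, hQk pq h1⟩
  have hfin := main n le_rfl
  filter_upwards [hfin] with pq h
  refine Prod.ext (funext fun j => ?_) (funext fun j => ?_)
  · exact (h j j.isLt).1
  · exact (h j j.isLt).2

end Helpers3


set_option maxHeartbeats 2000000 in
/-- the data `r, φ, P̃ᵢ, Q̃ᵢ` of the normal form of Theorem 2 are
functional invariants: if a local symplectomorphism of `ω₁` preserving `y`
transforms one normal form into another, then the corresponding invariants
coincide as germs at `0`. -/
theorem constrained_hamiltonian_invariants (n : ℕ) (hn : 1 ≤ n)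
    (r r' : ℝ → ℝ) (φ φ' : YPQ n → ℝ) (Pt Qt Pt' Qt' : Fin n → (PQ n → ℝ))
    (hrsm : SmoothGerm r) (hrsm' : SmoothGerm r')
    (hφsm : SmoothGerm φ) (hφsm' : SmoothGerm φ')
    (hPsm : ∀ i, SmoothGerm (Pt i)) (hQsm : ∀ i, SmoothGerm (Qt i))
    (hPsm' : ∀ i, SmoothGerm (Pt' i)) (hQsm' : ∀ i, SmoothGerm (Qt' i))
    (hr0 : r 0 = 0) (hr0' : r' 0 = 0)
    (hrd : deriv r 0 ≠ 0) (hrd' : deriv r' 0 ≠ 0)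
    (hφ0 : ∀ᶠ y in 𝓝 (0 : ℝ), φ (y, 0) = 0)
    (hφ0' : ∀ᶠ y in 𝓝 (0 : ℝ), φ' (y, 0) = 0)
    (hPt0 : Pt ⟨0, hn⟩ = 0) (hPt0' : Pt' ⟨0, hn⟩ = 0)
    (hQd : ∀ i : Fin n, fderiv ℝ (Qt i) 0 ((0, Pi.single i 1) : PQ n) ≠ 0)
    (hQd' : ∀ i : Fin n, fderiv ℝ (Qt' i) 0 ((0, Pi.single i 1) : PQ n) ≠ 0)
    (hPI : ∀ i : Fin n, InIdeal n (2 * i.1) (Pt i))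
    (hQI : ∀ i : Fin n, InIdeal n (2 * i.1 + 1) (Qt i))
    (hPI' : ∀ i : Fin n, InIdeal n (2 * i.1) (Pt' i))
    (hQI' : ∀ i : Fin n, InIdeal n (2 * i.1 + 1) (Qt' i))
    (g g' : YPQ n → ℝ)
    (hgdef : ∀ w : YPQ n, g w = r w.1
      + ∑ i : Fin n, ((w.2.1 i + Pt i w.2) * w.1 ^ (2 * i.1)
          + Qt i w.2 * w.1 ^ (2 * i.1 + 1))
      + φ w * w.1 ^ (2 * n))
    (hgdef' : ∀ w : YPQ n, g' w = r' w.1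
      + ∑ i : Fin n, ((w.2.1 i + Pt' i w.2) * w.1 ^ (2 * i.1)
          + Qt' i w.2 * w.1 ^ (2 * i.1 + 1))
      + φ' w * w.1 ^ (2 * n))
    (Ψ : XYPQ n → XYPQ n) (hΨ : IsLocalSymp1 n Ψ)
    (hy : ∀ᶠ z in 𝓝 (0 : XYPQ n), (Ψ z).2.1 = z.2.1)
    (hconj : ∀ᶠ z in 𝓝 (0 : XYPQ n),
      (Ψ z).1 ^ 2 + g' (Ψ z).2 = z.1 ^ 2 + g z.2) :
    (∀ᶠ y in 𝓝 (0 : ℝ), r y = r' y) ∧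
      (∀ᶠ w in 𝓝 (0 : YPQ n), φ w = φ' w) ∧
      (∀ i : Fin n, ∀ᶠ w in 𝓝 (0 : PQ n), Pt i w = Pt' i w) ∧
      (∀ i : Fin n, ∀ᶠ w in 𝓝 (0 : PQ n), Qt i w = Qt' i w) := by
  classical
  obtain ⟨hΨ0, hΨsm, _, hΨsymp⟩ := hΨ
  have hall : ∀ᶠ z in 𝓝 (0 : XYPQ n), DifferentiableAt ℝ Ψ z ∧
      (∀ u v, omega1 n (fderiv ℝ Ψ z u) (fderiv ℝ Ψ z v) = omega1 n u v) ∧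
      (Ψ z).2.1 = z.2.1 ∧ ((Ψ z).1 ^ 2 + g' (Ψ z).2 = z.1 ^ 2 + g z.2) :=
    (hΨsm.eventually_differentiableAt).and (hΨsymp.and (hy.and hconj))
  obtain ⟨U, hUP, hUo, hU0⟩ := eventually_nhds_iff.mp hall
  set πy : XYPQ n →L[ℝ] ℝ :=
    (ContinuousLinearMap.fst ℝ ℝ (PQ n)).comp (ContinuousLinearMap.snd ℝ ℝ (YPQ n)) with hπy
  -- the y-component of the derivative of Ψ is the y-component of the input
  have hyT : ∀ z ∈ U, ∀ v : XYPQ n, (fderiv ℝ Ψ z v).2.1 = v.2.1 := by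
    intro z hz v
    have hdz : DifferentiableAt ℝ Ψ z := (hUP z hz).1
    have h1 : HasFDerivAt (fun z : XYPQ n => πy (Ψ z)) (πy.comp (fderiv ℝ Ψ z)) z :=
      (πy.hasFDerivAt).comp z hdz.hasFDerivAt
    have h2 : HasFDerivAt (fun z : XYPQ n => z.2.1) (πy.comp (fderiv ℝ Ψ z)) z := by
      refine h1.congr_of_eventuallyEq ?_
      filter_upwards [hUo.mem_nhds hz] with w hw
      exact ((hUP w hw).2.2.1).symm
    have h3 : πy.comp (fderiv ℝ Ψ z) = πy := h2.unique πy.hasFDerivAt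
    exact congrArg (fun L : XYPQ n →L[ℝ] ℝ => L v) h3
  -- the derivative of Ψ is surjective on U
  have hsurj : ∀ z ∈ U, Function.Surjective (fderiv ℝ Ψ z) := by
    intro z hz
    have hsy := (hUP z hz).2.1
    have hinj : Function.Injective (fderiv ℝ Ψ z) := by
      intro u u' huu
      have h0 : ∀ v, omega1 n (u - u') v = 0 := by
        intro v
        have h1 := hsy (u - u') v
        rw [map_sub, huu, sub_self] at h1
        rw [← h1]
        simp only [omega1, omega0, Prod.fst_zero, Prod.snd_zero, Pi.zero_apply, zero_mul,
          mul_zero, sub_zero, zero_sub, neg_zero, Finset.sum_const_zero, add_zero]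
      have h4 := omega1_nondeg h0
      rwa [sub_eq_zero] at h4
    exact (LinearMap.injective_iff_surjective
      (f := ((fderiv ℝ Ψ z) : XYPQ n →ₗ[ℝ] XYPQ n))).mp hinj
  -- the derivative of Ψ fixes the direction ∂/∂x
  have hTx : ∀ z ∈ U, fderiv ℝ Ψ z ((1, 0) : XYPQ n) = ((1, 0) : XYPQ n) := by
    intro z hz
    have hsy := (hUP z hz).2.1
    have key : ∀ u : XYPQ n, omega1 n (fderiv ℝ Ψ z ((1, 0) : XYPQ n)) u = u.2.1 := by
      intro u
      obtain ⟨v, rfl⟩ := hsurj z hz u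
      rw [hsy ((1,0) : XYPQ n) v, hyT z hz v]
      simp [omega1, omega0]
    set W := fderiv ℝ Ψ z ((1,0) : XYPQ n) with hW
    have h1 : W.1 = 1 := by
      have := key ((0, 1, 0) : XYPQ n)
      simpa [omega1, omega0] using this
    have h2 : W.2.1 = 0 := by
      have := key ((1, 0) : XYPQ n)
      simpa [omega1, omega0] using this
    have h3 : ∀ i, W.2.2.1 i = 0 := by
      intro i
      have := key ((0, 0, 0, Pi.single i 1) : XYPQ n)
      simpa [omega1, omega0, Pi.single_apply, mul_ite, Finset.sum_ite_eq'] using this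
    have h4 : ∀ i, W.2.2.2 i = 0 := by
      intro i
      have hk := key ((0, 0, Pi.single i 1, 0) : XYPQ n)
      simp only [omega1, omega0, Pi.single_apply, mul_ite, mul_one, mul_zero, ite_mul,
        one_mul, zero_mul, mul_comm] at hk
      rw [Finset.sum_sub_distrib] at hk
      simp [Finset.sum_ite_eq'] at hk
      simpa using hk
    refine Prod.ext h1 (Prod.ext h2 (Prod.ext (funext fun i => h3 i) (funext fun i => h4 i)))
  -- choose a ball inside U
  obtain ⟨ρ, hρpos, hρU⟩ := Metric.isOpen_iff.mp hUo 0 hU0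
  set B := Metric.ball (0 : XYPQ n) ρ with hBdef
  have hBU : B ⊆ U := hρU
  have hBo : IsOpen B := Metric.isOpen_ball
  have hBconv : Convex ℝ B := convex_ball 0 ρ
  have hmemB : ∀ z : XYPQ n, z ∈ B ↔ ‖z‖ < ρ := by
    intro z
    rw [hBdef, Metric.mem_ball, dist_zero_right]
  have hsnd_memB : ∀ z : XYPQ n, z ∈ B → ((0:ℝ), z.2) ∈ B := by
    intro z hz
    rw [hmemB] at hz ⊢
    calc ‖(((0:ℝ), z.2) : XYPQ n)‖ = max ‖(0:ℝ)‖ ‖z.2‖ := rfl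
    _ = ‖z.2‖ := by rw [norm_zero]; exact max_eq_right (norm_nonneg _)
    _ ≤ ‖z‖ := norm_snd_le z
    _ < ρ := hz
  -- Stage 1b : Ψ is a shear in x
  have hstage1 : ∀ z ∈ B, Ψ z = Ψ ((0:ℝ), z.2) + z.1 • ((1,0) : XYPQ n) := by
    intro z hz
    have hzeq : (((0:ℝ), z.2) : XYPQ n) + z.1 • ((1,0) : XYPQ n) = z := by
      refine Prod.ext ?_ ?_ <;> simp
    have h := affine_of_fderiv_dir (f := Ψ) (D := fun z => fderiv ℝ Ψ z) hBconv
      (fun w hw => ((hUP w (hBU hw)).1).hasFDerivAt)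
      (v := ((1,0) : XYPQ n)) (c := ((1,0) : XYPQ n))
      (fun w hw => hTx w (hBU hw)) (a := (((0:ℝ), z.2) : XYPQ n)) (t := z.1)
      (hsnd_memB z hz) (by rw [hzeq]; exact hz)
    rw [hzeq] at h
    exact h
  -- Stage 2 : the x-component of Ψ(0,w) vanishes
  have hYnorm : ∀ w : YPQ n, (((0:ℝ), w) : XYPQ n) ∈ B ↔ ‖w‖ < ρ := by
    intro w
    rw [hmemB]
    have h0 : ‖(((0:ℝ), w) : XYPQ n)‖ = max ‖(0:ℝ)‖ ‖w‖ := rfl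
    rw [h0, norm_zero, max_eq_right (norm_nonneg _)]
  have hx0 : ∀ w : YPQ n, (((0:ℝ), w) : XYPQ n) ∈ B → (Ψ ((0:ℝ), w)).1 = 0 := by
    intro w hw
    have hwρ : ‖w‖ < ρ := (hYnorm w).mp hw
    set t : ℝ := (ρ + ‖w‖) / 2 with ht
    have htpos : 0 < t := by positivity
    have htlt : t < ρ := by
      rw [ht]; linarith
    have hwt : ‖w‖ ≤ t := by rw [ht]; linarith
    have htB : ((t, w) : XYPQ n) ∈ B := by
      rw [hmemB]
      have h0 : ‖((t, w) : XYPQ n)‖ = max ‖t‖ ‖w‖ := rfl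
      rw [h0, Real.norm_eq_abs, abs_of_pos htpos]
      exact max_lt htlt hwρ
    have hconj_t := (hUP _ (hBU htB)).2.2.2
    have hconj_0 := (hUP _ (hBU hw)).2.2.2
    have hform := hstage1 ((t, w) : XYPQ n) htB
    have hft : (Ψ ((t, w) : XYPQ n)).1 = (Ψ ((0:ℝ), w)).1 + t := by
      rw [hform]; simp
    have hfs : (Ψ ((t, w) : XYPQ n)).2 = (Ψ ((0:ℝ), w)).2 := by
      rw [hform]; simp
    rw [hft, hfs] at hconj_t
    simp only at hconj_t hconj_0
    set A := (Ψ (((0:ℝ), w) : XYPQ n)).1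
    have h2At : 2 * A * t = 0 := by nlinarith [hconj_t, hconj_0]
    have hA0 : A = 0 := by
      rcases mul_eq_zero.mp h2At with h | h
      · rcases mul_eq_zero.mp h with h' | h'
        · norm_num at h'
        · exact h'
      · exact absurd h (ne_of_gt htpos)
    exact hA0
  -- the fibered map
  set Φf : YPQ n → PQ n := fun w => (Ψ (((0:ℝ), w) : XYPQ n)).2.2 with hΦf
  have hstarf : ∀ w : YPQ n, (((0:ℝ), w) : XYPQ n) ∈ B → g w = g' (w.1, Φf w) := by
    intro w hw
    have hconj_0 := (hUP _ (hBU hw)).2.2.2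
    have hy0 := (hUP _ (hBU hw)).2.2.1
    simp only at hconj_0 hy0
    rw [hx0 w hw] at hconj_0
    have h2 : (Ψ (((0:ℝ), w) : XYPQ n)).2 = (w.1, Φf w) := by
      refine Prod.ext ?_ rfl
      rw [hy0]
    rw [h2] at hconj_0
    simpa using hconj_0.symm
  have hΨform : ∀ z ∈ B, Ψ z = ((z.1, z.2.1, Φf z.2) : XYPQ n) := by
    intro z hz
    have h1 := hstage1 z hz
    have hw := hsnd_memB z hz
    have hy0 := (hUP _ (hBU hw)).2.2.1
    simp only at hy0
    rw [h1]
    refine Prod.ext ?_ (Prod.ext ?_ ?_)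
    · simp [hx0 z.2 hw]
    · simp [hy0]
    · simp [hΦf]
  
  -- differentiability of the fiber map
  have hΦfdiff : ∀ w : YPQ n, (((0:ℝ), w) : XYPQ n) ∈ U → DifferentiableAt ℝ Φf w := by
    intro w hw
    have hdz : DifferentiableAt ℝ Ψ (((0:ℝ), w) : XYPQ n) := (hUP _ hw).1
    have h1 : DifferentiableAt ℝ (fun w : YPQ n => Ψ (((0:ℝ), w) : XYPQ n)) w :=
      hdz.comp w (DifferentiableAt.prodMk (differentiableAt_const _) differentiableAt_id)
    exact h1.snd.snd
  -- Stage 3 : the pq-block of DΨ is fiberwise symplectic and kills ∂/∂y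
  have hdagger : ∀ z ∈ B, ∀ u v : YPQ n,
      omega0 n (fderiv ℝ Φf z.2 u) (fderiv ℝ Φf z.2 v) = omega0 n u.2 v.2 := by
    intro z hz u v
    have hΦd : DifferentiableAt ℝ Φf z.2 := hΦfdiff z.2 (hBU (hsnd_memB z hz))
    set D : XYPQ n →L[ℝ] XYPQ n :=
      (ContinuousLinearMap.fst ℝ ℝ (YPQ n)).prod
        (πy.prod ((fderiv ℝ Φf z.2).comp (ContinuousLinearMap.snd ℝ ℝ (YPQ n)))) with hD
    have hF : HasFDerivAt (fun z : XYPQ n => ((z.1, z.2.1, Φf z.2) : XYPQ n)) D z := by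
      refine HasFDerivAt.prodMk hasFDerivAt_fst (HasFDerivAt.prodMk ?_ ?_)
      · exact πy.hasFDerivAt
      · exact (hΦd.hasFDerivAt).comp z hasFDerivAt_snd
    have hΨz : HasFDerivAt Ψ D z := by
      refine hF.congr_of_eventuallyEq ?_
      filter_upwards [hBo.mem_nhds hz] with w hw
      exact hΨform w hw
    have hsy := (hUP z (hBU hz)).2.1
    have h1 := hsy (((0:ℝ), u) : XYPQ n) (((0:ℝ), v) : XYPQ n)
    rw [hΨz.fderiv] at h1
    have hDap : ∀ u : YPQ n, D (((0:ℝ), u) : XYPQ n) = (((0:ℝ), u.1, fderiv ℝ Φf z.2 u) : XYPQ n) := by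
      intro u
      simp [hD, ContinuousLinearMap.prod_apply, hπy]
    rw [hDap u, hDap v] at h1
    simpa [omega1] using h1
  have hΦfy0 : ∀ w : YPQ n, w ∈ Metric.ball (0 : YPQ n) ρ →
      fderiv ℝ Φf w ((1, 0) : YPQ n) = 0 := by
    intro w hw
    have hwB : (((0:ℝ), w) : XYPQ n) ∈ B := by
      rw [hYnorm]
      rw [Metric.mem_ball, dist_zero_right] at hw
      exact hw
    have hdg := hdagger (((0:ℝ), w) : XYPQ n) hwB
    set A := fderiv ℝ Φf w with hA
    set L : PQ n →L[ℝ] PQ n := A.comp (ContinuousLinearMap.inr ℝ ℝ (PQ n)) with hL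
    have hLsymp : ∀ u' v' : PQ n, omega0 n (L u') (L v') = omega0 n u' v' := by
      intro u' v'
      have h2 := hdg (((0:ℝ), u') : YPQ n) (((0:ℝ), v') : YPQ n)
      simpa [hL] using h2
    have hLsurj : Function.Surjective L := by
      have hinj : Function.Injective L := by
        intro a b hab
        have h0 : ∀ v', omega0 n (a - b) v' = 0 := by
          intro v'
          have h1 := hLsymp (a - b) v'
          rw [map_sub, hab, sub_self] at h1
          rw [← h1]
          simp only [omega0, Prod.fst_zero, Prod.snd_zero, Pi.zero_apply, zero_mul,
            sub_zero, Finset.sum_const_zero]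
        have h5 := omega0_nondeg h0
        rwa [sub_eq_zero] at h5
      exact (LinearMap.injective_iff_surjective (f := (L : PQ n →ₗ[ℝ] PQ n))).mp hinj
    have hkey : ∀ u', omega0 n (A ((1, 0) : YPQ n)) u' = 0 := by
      intro u'
      obtain ⟨v', rfl⟩ := hLsurj u'
      have h2 := hdg ((1, (0 : PQ n)) : YPQ n) (((0:ℝ), v') : YPQ n)
      have h3 : omega0 n (((1, (0 : PQ n)) : YPQ n).2) ((((0:ℝ), v') : YPQ n).2) = 0 := by
        simp only [omega0, Prod.fst_zero, Prod.snd_zero, Pi.zero_apply, zero_mul,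
          sub_zero, Finset.sum_const_zero]
      rw [h3] at h2
      simpa [hL] using h2
    exact omega0_nondeg hkey
  set BY := Metric.ball (0 : YPQ n) ρ with hBY
  have hBYconv : Convex ℝ BY := convex_ball 0 ρ
  have hBYmem : ∀ w : YPQ n, w ∈ BY ↔ ‖w‖ < ρ := by
    intro w
    rw [hBY, Metric.mem_ball, dist_zero_right]
  have hBYB : ∀ w : YPQ n, w ∈ BY → (((0:ℝ), w) : XYPQ n) ∈ B := by
    intro w hw
    rw [hYnorm]
    exact (hBYmem w).mp hw
  set Φ0 : PQ n → PQ n := fun pq => Φf (((0:ℝ), pq) : YPQ n) with hΦ0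
  have hΦfconst : ∀ w ∈ BY, Φf w = Φ0 w.2 := by
    intro w hw
    have hwρ : ‖w‖ < ρ := (hBYmem w).mp hw
    have haY : (((0:ℝ), w.2) : YPQ n) ∈ BY := by
      rw [hBYmem]
      calc ‖(((0:ℝ), w.2) : YPQ n)‖ = max ‖(0:ℝ)‖ ‖w.2‖ := rfl
      _ = ‖w.2‖ := by rw [norm_zero]; exact max_eq_right (norm_nonneg _)
      _ ≤ ‖w‖ := norm_snd_le w
      _ < ρ := hwρ
    have hww : (((0:ℝ), w.2) : YPQ n) + w.1 • ((1, 0) : YPQ n) = w := by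
      refine Prod.ext ?_ ?_ <;> simp
    have h := affine_of_fderiv_dir (f := Φf) (D := fun w => fderiv ℝ Φf w) hBYconv
      (fun z hz => (hΦfdiff z (hBU (hBYB z hz))).hasFDerivAt)
      (v := ((1, 0) : YPQ n)) (c := (0 : PQ n)) (fun z hz => hΦfy0 z hz)
      haY (by rw [hww]; exact hw)
    rw [hww] at h
    simpa [hΦ0] using h
  have hΦ00 : Φ0 0 = 0 := by
    have h0 : (((0:ℝ), (((0:ℝ), (0 : PQ n)) : YPQ n)) : XYPQ n) = 0 := by
      refine Prod.ext rfl (Prod.ext rfl rfl)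
    show (Ψ _).2.2 = 0
    rw [h0, hΨ0]
    rfl
  have hΦ0diff : ∀ pq : PQ n, (((0:ℝ), (0:ℝ), pq) : XYPQ n) ∈ U → DifferentiableAt ℝ Φ0 pq := by
    intro pq hpq
    have h1 : DifferentiableAt ℝ Φf (((0:ℝ), pq) : YPQ n) := hΦfdiff _ hpq
    exact h1.comp pq (DifferentiableAt.prodMk (differentiableAt_const _) differentiableAt_id)
  have hΦ0fd : ∀ pq : PQ n, (((0:ℝ), (0:ℝ), pq) : XYPQ n) ∈ U →
      ∀ u' : PQ n, fderiv ℝ Φ0 pq u'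
        = fderiv ℝ Φf (((0:ℝ), pq) : YPQ n) (((0:ℝ), u') : YPQ n) := by
    intro pq hpq u'
    have h1 : DifferentiableAt ℝ Φf (((0:ℝ), pq) : YPQ n) := hΦfdiff _ hpq
    have h2 : HasFDerivAt Φ0 ((fderiv ℝ Φf (((0:ℝ), pq) : YPQ n)).comp
        (ContinuousLinearMap.inr ℝ ℝ (PQ n))) pq :=
      (h1.hasFDerivAt).comp pq (ContinuousLinearMap.inr ℝ ℝ (PQ n)).hasFDerivAt
    rw [h2.fderiv]
    rfl
  have hΦ0symp : ∀ pq : PQ n, (((0:ℝ), (0:ℝ), pq) : XYPQ n) ∈ B →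
      ∀ u' v' : PQ n, omega0 n (fderiv ℝ Φ0 pq u') (fderiv ℝ Φ0 pq v') = omega0 n u' v' := by
    intro pq hpq u' v'
    have hU' := hBU hpq
    rw [hΦ0fd pq hU' u', hΦ0fd pq hU' v']
    exact hdagger (((0:ℝ), (0:ℝ), pq) : XYPQ n) hpq (((0:ℝ), u') : YPQ n) (((0:ℝ), v') : YPQ n)
  have hstar : ∀ w : YPQ n, w ∈ BY → g w = g' (w.1, Φ0 w.2) := by
    intro w hw
    rw [← hΦfconst w hw]
    exact hstarf w (hBYB w hw)
  
  -- Stage 5 : coefficient extraction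
  have hPt00 : ∀ i : Fin n, Pt i 0 = 0 := by
    intro i
    obtain ⟨c, hcs, hrep⟩ := hPI i
    rw [hrep.self_of_nhds]
    simp [genFun_zero]
  have hQt00 : ∀ i : Fin n, Qt i 0 = 0 := by
    intro i
    obtain ⟨c, hcs, hrep⟩ := hQI i
    rw [hrep.self_of_nhds]
    simp [genFun_zero]
  have hPt00' : ∀ i : Fin n, Pt' i 0 = 0 := by
    intro i
    obtain ⟨c, hcs, hrep⟩ := hPI' i
    rw [hrep.self_of_nhds]
    simp [genFun_zero]
  have hQt00' : ∀ i : Fin n, Qt' i 0 = 0 := by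
    intro i
    obtain ⟨c, hcs, hrep⟩ := hQI' i
    rw [hrep.self_of_nhds]
    simp [genFun_zero]
  have hrr' : ∀ᶠ yv in 𝓝 (0:ℝ), r yv = r' yv := by
    have hyball : ∀ᶠ yv in 𝓝 (0:ℝ), ((yv, (0:PQ n)) : YPQ n) ∈ BY := by
      filter_upwards [Metric.ball_mem_nhds (0:ℝ) hρpos] with yv hyv
      rw [hBYmem]
      have h0 : ‖((yv, (0:PQ n)) : YPQ n)‖ = max ‖yv‖ ‖(0:PQ n)‖ := rfl
      rw [h0, norm_zero, max_eq_left (norm_nonneg _)]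
      rw [Metric.mem_ball, dist_zero_right] at hyv
      exact hyv
    filter_upwards [hφ0, hφ0', hyball] with yv h1 h2 h3
    have hst := hstar ((yv, (0:PQ n)) : YPQ n) h3
    rw [hgdef, hgdef'] at hst
    simp only [hΦ00] at hst
    simp only [Prod.fst_zero, Pi.zero_apply, zero_add] at hst
    simp [hPt00, hQt00, hPt00', hQt00', h1, h2] at hst
    exact hst
  obtain ⟨ε₀, hε₀pos, hε₀⟩ := Metric.eventually_nhds_iff.mp hrr'
  set ε₁ : ℝ := min ε₀ ρ with hε₁def
  have hε₁pos : 0 < ε₁ := lt_min hε₀pos hρpos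
  set ecoef : Fin n → PQ n → ℝ :=
    fun i pq => (pq.1 i + Pt i pq) - ((Φ0 pq).1 i + Pt' i (Φ0 pq)) with hecoef
  set fcoef : Fin n → PQ n → ℝ := fun i pq => Qt i pq - Qt' i (Φ0 pq) with hfcoef
  set ψd : ℝ → PQ n → ℝ := fun yv pq => φ (yv, pq) - φ' (yv, Φ0 pq) with hψd
  have hident : ∀ pq : PQ n, ‖pq‖ < ε₁ → ∀ yv : ℝ, |yv| < ε₁ →
      (∑ j ∈ Finset.range (2*n),
        (if h : j / 2 < n then
          (if j % 2 = 0 then ecoef ⟨j/2, h⟩ pq else fcoef ⟨j/2, h⟩ pq) else 0) * yv ^ j)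
        + ψd yv pq * yv ^ (2*n) = 0 := by
    intro pq hpq yv hyv
    have hyvρ : |yv| < ρ := lt_of_lt_of_le hyv (min_le_right _ _)
    have hpqρ : ‖pq‖ < ρ := lt_of_lt_of_le hpq (min_le_right _ _)
    have hwBY : ((yv, pq) : YPQ n) ∈ BY := by
      rw [hBYmem]
      have h0 : ‖((yv, pq) : YPQ n)‖ = max ‖yv‖ ‖pq‖ := rfl
      rw [h0, Real.norm_eq_abs]
      exact max_lt hyvρ hpqρ
    have hst := hstar ((yv, pq) : YPQ n) hwBY
    rw [hgdef, hgdef'] at hst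
    have hr : r yv = r' yv := by
      apply hε₀
      rw [Real.dist_eq, sub_zero]
      exact lt_of_lt_of_le hyv (min_le_left _ _)
    rw [sum_interleave n (fun m => ecoef m pq) (fun m => fcoef m pq) yv]
    have hsplit : (∑ i : Fin n, ((fun m => ecoef m pq) i * yv ^ (2*i.1)
          + (fun m => fcoef m pq) i * yv ^ (2*i.1+1)))
        = (∑ i : Fin n, ((pq.1 i + Pt i pq) * yv ^ (2*i.1) + Qt i pq * yv ^ (2*i.1+1)))
          - ∑ i : Fin n, (((Φ0 pq).1 i + Pt' i (Φ0 pq)) * yv ^ (2*i.1)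
            + Qt' i (Φ0 pq) * yv ^ (2*i.1+1)) := by
      rw [← Finset.sum_sub_distrib]
      refine Finset.sum_congr rfl fun i _ => ?_
      simp only [hecoef, hfcoef]
      ring
    rw [hsplit]
    simp only [hψd]
    simp only at hst
    linear_combination hst - hr
  -- eventual facts about Φ0
  have hUmem : ∀ᶠ z in 𝓝 (0:XYPQ n), z ∈ U := hUo.mem_nhds hU0
  have hBmem : ∀ᶠ z in 𝓝 (0:XYPQ n), z ∈ B := by
    refine hBo.mem_nhds ?_
    rw [hmemB]
    simpa using hρpos
  have hpq_lift : Filter.Tendsto (fun pq : PQ n => (((0:ℝ), (0:ℝ), pq) : XYPQ n))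
      (𝓝 0) (𝓝 0) := by
    have hc : Continuous (fun pq : PQ n => (((0:ℝ), (0:ℝ), pq) : XYPQ n)) :=
      continuous_const.prodMk (continuous_const.prodMk continuous_id)
    exact hc.tendsto 0
  have hΦ0diffev : ∀ᶠ pq in 𝓝 (0:PQ n), DifferentiableAt ℝ Φ0 pq := by
    filter_upwards [hpq_lift.eventually hUmem] with pq hpq
    exact hΦ0diff pq hpq
  have hΦ0cont0 : ContinuousAt Φ0 0 := (hΦ0diffev.self_of_nhds).continuousAt
  have hΦ0t : Filter.Tendsto Φ0 (𝓝 0) (𝓝 (0:PQ n)) := by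
    have h0 := hΦ0cont0.tendsto
    rwa [hΦ00] at h0
  have hΦ0sympev : ∀ᶠ pq in 𝓝 (0:PQ n), ∀ u v : PQ n,
      omega0 n (fderiv ℝ Φ0 pq u) (fderiv ℝ Φ0 pq v) = omega0 n u v := by
    filter_upwards [hpq_lift.eventually hBmem] with pq hpq
    exact hΦ0symp pq hpq
  -- continuity of the remainder
  have hφc := hφsm.eventually_continuousAt
  have hφc' := hφsm'.eventually_continuousAt
  have hlift1 : Filter.Tendsto (fun pq : PQ n => (((0:ℝ), pq) : YPQ n)) (𝓝 0) (𝓝 0) := by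
    have hc : Continuous (fun pq : PQ n => (((0:ℝ), pq) : YPQ n)) :=
      continuous_const.prodMk continuous_id
    exact hc.tendsto 0
  have hlift2 : Filter.Tendsto (fun pq : PQ n => (((0:ℝ), Φ0 pq) : YPQ n)) (𝓝 0) (𝓝 0) := by
    have h2 := (tendsto_const_nhds (x := (0:ℝ)) (f := 𝓝 (0:PQ n))).prodMk_nhds hΦ0t
    exact h2
  have hψcont : ∀ᶠ pq in 𝓝 (0:PQ n), ContinuousAt (fun yv => ψd yv pq) 0 := by
    filter_upwards [hlift1.eventually hφc, hlift2.eventually hφc'] with pq h1 h2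
    have hf1 : ContinuousAt (fun yv : ℝ => ((yv, pq) : YPQ n)) 0 :=
      (continuous_id.prodMk continuous_const).continuousAt
    have hf2 : ContinuousAt (fun yv : ℝ => ((yv, Φ0 pq) : YPQ n)) 0 :=
      (continuous_id.prodMk continuous_const).continuousAt
    have hc1 : ContinuousAt (fun yv : ℝ => φ (yv, pq)) 0 :=
      ContinuousAt.comp (f := fun yv : ℝ => ((yv, pq) : YPQ n)) h1 hf1
    have hc2 : ContinuousAt (fun yv : ℝ => φ' (yv, Φ0 pq)) 0 :=
      ContinuousAt.comp (f := fun yv : ℝ => ((yv, Φ0 pq) : YPQ n)) h2 hf2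
    simp only [hψd]
    exact hc1.sub hc2
  have hεball : ∀ᶠ pq in 𝓝 (0:PQ n), ‖pq‖ < ε₁ := by
    filter_upwards [Metric.ball_mem_nhds (0:PQ n) hε₁pos] with pq h
    rwa [Metric.mem_ball, dist_zero_right] at h
  have hcoefs : ∀ᶠ pq in 𝓝 (0:PQ n),
      (∀ i : Fin n, ecoef i pq = 0 ∧ fcoef i pq = 0)
        ∧ ∀ yv : ℝ, |yv| < ε₁ → ψd yv pq = 0 := by
    filter_upwards [hψcont, hεball] with pq h1 h2
    obtain ⟨hd0, hψ0⟩ := poly_coeff_zero hε₁pos h1 (hident pq h2)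
    refine ⟨fun i => ⟨?_, ?_⟩, hψ0⟩
    · have h3 := hd0 (2*i.1) (by have := i.isLt; omega)
      rwa [dite_interleave_even (fun m => ecoef m pq) (fun m => fcoef m pq) i] at h3
    · have h3 := hd0 (2*i.1+1) (by have := i.isLt; omega)
      rwa [dite_interleave_odd (fun m => ecoef m pq) (fun m => fcoef m pq) i] at h3
  have hAev : ∀ᶠ pq in 𝓝 (0:PQ n), ∀ i : Fin n,
      (Φ0 pq).1 i + Pt' i (Φ0 pq) = pq.1 i + Pt i pq := by
    filter_upwards [hcoefs] with pq h
    intro i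
    have h4 := (h.1 i).1
    simp only [hecoef] at h4
    linarith [h4]
  have hBev : ∀ᶠ pq in 𝓝 (0:PQ n), ∀ i : Fin n, Qt i pq = Qt' i (Φ0 pq) := by
    filter_upwards [hcoefs] with pq h
    intro i
    have h4 := (h.1 i).2
    simp only [hfcoef] at h4
    linarith [h4]
  -- Stage 6 : Φ0 is the identity
  have hfix := phi0_eq_id Pt Qt Pt' Qt' Φ0 hΦ00 hΦ0diffev hΦ0sympev
    hPI hQI hPI' hQI' hQsm' hQd' hAev hBev
  -- Conclusions
  refine ⟨hrr', ?_, ?_, ?_⟩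
  · obtain ⟨ε₂, hε₂pos, hε₂⟩ := Metric.eventually_nhds_iff.mp (hcoefs.and hfix)
    refine Metric.eventually_nhds_iff.mpr ⟨min ε₂ ε₁, lt_min hε₂pos hε₁pos, ?_⟩
    intro w hw
    have hw2 : dist w.2 (0 : PQ n) < ε₂ := by
      calc dist w.2 (0:PQ n) = dist w.2 ((0:YPQ n)).2 := rfl
      _ ≤ dist w (0:YPQ n) := by rw [Prod.dist_eq]; exact le_max_right _ _
      _ < min ε₂ ε₁ := hw
      _ ≤ ε₂ := min_le_left _ _
    have hy1 : |w.1| < ε₁ := by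
      calc |w.1| = dist w.1 ((0:YPQ n)).1 := by rw [Real.dist_eq]; simp
      _ ≤ dist w (0:YPQ n) := by rw [Prod.dist_eq]; exact le_max_left _ _
      _ < min ε₂ ε₁ := hw
      _ ≤ ε₁ := min_le_right _ _
    obtain ⟨⟨_, hψ0⟩, hfixw⟩ := hε₂ hw2
    have h5 := hψ0 w.1 hy1
    simp only [hψd, hfixw] at h5
    have h6 : φ (w.1, w.2) - φ' (w.1, w.2) = 0 := h5
    have h7 : (w.1, w.2) = w := rfl
    rw [h7] at h6
    linarith [h6]
  · intro i
    filter_upwards [hAev, hfix] with pq hA1 hfx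
    have h4 := hA1 i
    rw [hfx] at h4
    linarith [h4]
  · intro i
    filter_upwards [hBev, hfix] with pq hB1 hfx
    have h4 := hB1 i
    rw [hfx] at h4
    linarith [h4]
end
end

section
/- Let n ≥ 1 and let Ψ be a local symplectomorphism of ω₀ on ℝ^{2n} such that p₁∘Ψ = p₁ on a neighbourhood of 0. Then there exist a smooth function germ A and a smooth map germ B = (B₁,…,B_{2n−2}), both independent of the variable q₁ (i.e. functions of the variables (p₁,…,pₙ,q₂,…,qₙ) only), such that on a neighbourhood of 0, Ψ(p,q) = (p₁, q₁ + A, B), where q₁∘Ψ = q₁ + A and the components of B are the components (p₂∘Ψ, q₂∘Ψ, …, pₙ∘Ψ, qₙ∘Ψ) of Ψ. -/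
open Filter Topology

noncomputable section

lemma omega0_pair_right {n : ℕ} (w : PQ (n+1)) :
    omega0 (n+1) w ((0 : Fin (n+1) → ℝ), Pi.single 0 (1:ℝ)) = w.1 0 := by
  simp [omega0, Pi.single_apply, mul_ite]

lemma omega0_sub_right {n : ℕ} (w a b : PQ n) :
    omega0 n w (a - b) = omega0 n w a - omega0 n w b := by
  simp only [omega0, ← Finset.sum_sub_distrib, Prod.fst_sub, Prod.snd_sub, Pi.sub_apply]
  exact Finset.sum_congr rfl fun i _ => by ring

lemma omega0_zero_left {n : ℕ} (v : PQ n) : omega0 n 0 v = 0 := by simp [omega0]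

lemma omega0_nondeg_right {n : ℕ} (v : PQ n) (h : ∀ u, omega0 n u v = 0) : v = 0 := by
  have h2 : ∀ i, v.2 i = 0 := by
    intro i
    have := h (Pi.single i 1, 0)
    simpa [omega0, Pi.single_apply, ite_mul] using this
  have h1 : ∀ i, v.1 i = 0 := by
    intro i
    have := h (0, Pi.single i 1)
    simpa [omega0, Pi.single_apply, ite_mul] using this
  refine Prod.ext ?_ ?_ <;> funext i
  · exact h1 i
  · exact h2 i

lemma omega0_nondeg_left {n : ℕ} (u : PQ n) (h : ∀ v, omega0 n u v = 0) : u = 0 := by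
  apply omega0_nondeg_right
  intro w
  have hanti : omega0 n w u = - omega0 n u w := by
    simp only [omega0, ← Finset.sum_neg_distrib]
    exact Finset.sum_congr rfl fun i _ => by ring
  rw [hanti, h w, neg_zero]


/-- any local symplectomorphism of `ω₀` on `ℝ^{2(n+1)}` preserving
`p₁` has the form `(p,q) ↦ (p₁, q₁ + A, B)` where the germs `A` and
`B = (B₁,…,B_{2n})` do not depend on the variable `q₁`, i.e. they are functions of
`(p₁,…,p_{n+1}, q₂,…,q_{n+1})` only. -/
theorem symplecto_preserving_p1 (n : ℕ) (Ψ : PQ (n + 1) → PQ (n + 1))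
    (hΨ : IsLocalSymp (n + 1) Ψ)
    (hp1 : ∀ᶠ z in 𝓝 (0 : PQ (n + 1)), (Ψ z).1 0 = z.1 0) :
    ∃ (A : (Fin (n + 1) → ℝ) × (Fin n → ℝ) → ℝ)
      (Bp Bq : Fin n → ((Fin (n + 1) → ℝ) × (Fin n → ℝ) → ℝ)),
      SmoothGerm A ∧ (∀ i, SmoothGerm (Bp i)) ∧ (∀ i, SmoothGerm (Bq i)) ∧
      ∀ᶠ z in 𝓝 (0 : PQ (n + 1)),
        (Ψ z).1 0 = z.1 0 ∧
        (Ψ z).2 0 = z.2 0 + A (z.1, fun j => z.2 j.succ) ∧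
        ∀ i : Fin n,
          (Ψ z).1 i.succ = Bp i (z.1, fun j => z.2 j.succ) ∧
          (Ψ z).2 i.succ = Bq i (z.1, fun j => z.2 j.succ) := by
  classical
  obtain ⟨hΨ0, ⟨U, hU, hUs⟩, hbij, homega⟩ := hΨ
  set e : PQ (n+1) := ((0 : Fin (n+1) → ℝ), Pi.single 0 (1:ℝ)) with he
  have hp1' : {z : PQ (n+1) | (Ψ z).1 0 = z.1 0} ∈ 𝓝 (0 : PQ (n+1)) := hp1
  have homega' : {z : PQ (n+1) | ∀ u v, omega0 (n+1) (fderiv ℝ Ψ z u) (fderiv ℝ Ψ z v)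
      = omega0 (n+1) u v} ∈ 𝓝 (0 : PQ (n+1)) := homega
  set W : Set (PQ (n+1)) :=
    (interior U ∩ interior {z | (Ψ z).1 0 = z.1 0}) ∩
      interior {z | ∀ u v, omega0 (n+1) (fderiv ℝ Ψ z u) (fderiv ℝ Ψ z v) = omega0 (n+1) u v}
    with hWdef
  have hWmem : W ∈ 𝓝 (0 : PQ (n+1)) := by
    refine Filter.inter_mem (Filter.inter_mem ?_ ?_) ?_
    · exact interior_mem_nhds.mpr hU
    · exact interior_mem_nhds.mpr hp1'
    · exact interior_mem_nhds.mpr homega'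
  have hdiff : ∀ z ∈ W, DifferentiableAt ℝ Ψ z := by
    intro z hz
    have hUz : U ∈ 𝓝 z := mem_nhds_iff.mpr ⟨interior U, interior_subset, isOpen_interior, hz.1.1⟩
    exact (hUs.differentiableOn (by simp)).differentiableAt hUz
  have hpres : ∀ z ∈ W, ∀ u v,
      omega0 (n+1) (fderiv ℝ Ψ z u) (fderiv ℝ Ψ z v) = omega0 (n+1) u v :=
    fun z hz => interior_subset hz.2
  have key1 : ∀ z ∈ W, ∀ u, (fderiv ℝ Ψ z u).1 0 = u.1 0 := by
    intro z hz u
    set L : PQ (n+1) →L[ℝ] ℝ :=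
      (ContinuousLinearMap.proj 0).comp
        (ContinuousLinearMap.fst ℝ (Fin (n+1) → ℝ) (Fin (n+1) → ℝ)) with hL
    have heq : (fun y => L (Ψ y)) =ᶠ[𝓝 z] fun y : PQ (n+1) => L y := by
      filter_upwards [isOpen_interior.mem_nhds hz.1.2] with y hy
      have h' : y ∈ {z : PQ (n+1) | (Ψ z).1 0 = z.1 0} := interior_subset hy
      exact h'
    have h1 : fderiv ℝ (fun y => L (Ψ y)) z = L.comp (fderiv ℝ Ψ z) :=
      (L.hasFDerivAt.comp z (hdiff z hz).hasFDerivAt).fderiv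
    have h2 : fderiv ℝ (fun y : PQ (n+1) => L y) z = L := L.fderiv
    have h3 := heq.fderiv_eq (𝕜 := ℝ)
    rw [h1, h2] at h3
    exact DFunLike.congr_fun h3 u
  have hsurj : ∀ z ∈ W, Function.Surjective (fderiv ℝ Ψ z) := by
    intro z hz
    have hinj : Function.Injective (fderiv ℝ Ψ z) := by
      intro a b hab
      have hz0 : fderiv ℝ Ψ z (a - b) = 0 := by rw [map_sub, hab, sub_self]
      have hab0 : a - b = 0 := by
        apply omega0_nondeg_left
        intro v
        have h := hpres z hz (a - b) v
        rw [hz0, omega0_zero_left] at h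
        exact h.symm
      exact sub_eq_zero.mp hab0
    have hsur : Function.Surjective ((fderiv ℝ Ψ z).toLinearMap :
        PQ (n+1) →ₗ[ℝ] PQ (n+1)) := LinearMap.injective_iff_surjective.mp hinj
    exact hsur
  have hpr : ∀ w : PQ (n+1), omega0 (n+1) w e = w.1 0 := by
    intro w; rw [he]; exact omega0_pair_right w
  have keyE : ∀ z ∈ W, fderiv ℝ Ψ z e = e := by
    intro z hz
    have hz0 : ∀ w, omega0 (n+1) w (fderiv ℝ Ψ z e - e) = 0 := by
      intro w
      obtain ⟨u, rfl⟩ := hsurj z hz w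
      rw [omega0_sub_right, hpres z hz u e, hpr, hpr, key1 z hz u, sub_self]
    exact sub_eq_zero.mp (omega0_nondeg_right _ hz0)
  obtain ⟨r, hr0, hball⟩ := Metric.mem_nhds_iff.mp hWmem
  have hline : ∀ z ∈ Metric.ball (0 : PQ (n+1)) r,
      Ψ z = Ψ (z.1, Function.update z.2 0 0) + z.2 0 • e := by
    intro z hz
    rw [mem_ball_zero_iff] at hz
    set c : PQ (n+1) := (z.1, Function.update z.2 0 0) with hc
    have hline_pt : ∀ t : ℝ, c + t • e = (z.1, Function.update z.2 0 t) := by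
      intro t
      rw [hc, he]
      refine Prod.ext (by simp) ?_
      funext j
      by_cases hj : j = 0
      · subst hj; simp
      · simp [Function.update_of_ne hj, Pi.single_apply, hj]
    have hmem : ∀ t : ℝ, |t| < r → c + t • e ∈ Metric.ball (0 : PQ (n+1)) r := by
      intro t ht
      rw [hline_pt, mem_ball_zero_iff, Prod.norm_def]
      refine max_lt (lt_of_le_of_lt (norm_fst_le z) hz) ?_
      rw [pi_norm_lt_iff hr0]
      intro j
      show ‖Function.update z.2 0 t j‖ < r
      rw [Function.update_apply]
      split
      · rwa [Real.norm_eq_abs]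
      · exact lt_of_le_of_lt ((norm_le_pi_norm z.2 j).trans (norm_snd_le z)) hz
    set g : ℝ → PQ (n+1) := fun t => Ψ (c + t • e) - t • e with hg
    have hgderiv : ∀ t ∈ Metric.ball (0:ℝ) r, HasDerivAt g 0 t := by
      intro t ht
      rw [mem_ball_zero_iff, Real.norm_eq_abs] at ht
      have hWt : c + t • e ∈ W := hball (hmem t ht)
      have h1 : HasDerivAt (fun s : ℝ => c + s • e) e t := by
        simpa using ((hasDerivAt_id t).smul_const e).const_add c
      have h2 : HasDerivAt (fun s : ℝ => Ψ (c + s • e)) (fderiv ℝ Ψ (c + t • e) e) t :=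
        (hdiff _ hWt).hasFDerivAt.comp_hasDerivAt t h1
      have h3 : HasDerivAt (fun s : ℝ => s • e) e t := by
        simpa using (hasDerivAt_id t).smul_const e
      have h4 := h2.sub h3
      rw [keyE _ hWt, sub_self] at h4
      exact h4
    have hconst : ∀ t ∈ Metric.ball (0:ℝ) r, g t = g 0 := by
      intro t ht
      refine (convex_ball (0:ℝ) r).is_const_of_fderivWithin_eq_zero
        (fun s hs => (hgderiv s hs).differentiableAt.differentiableWithinAt)
        (fun s hs => ?_) ht (Metric.mem_ball_self hr0)
      rw [fderivWithin_of_isOpen Metric.isOpen_ball hs]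
      have h0 : HasFDerivAt g
          (ContinuousLinearMap.smulRight (1 : ℝ →L[ℝ] ℝ) (0 : PQ (n+1))) s :=
        hasDerivAt_iff_hasFDerivAt.mp (hgderiv s hs)
      have hz' : (ContinuousLinearMap.smulRight (1 : ℝ →L[ℝ] ℝ) (0 : PQ (n+1)))
          = (0 : ℝ →L[ℝ] PQ (n+1)) := by
        refine ContinuousLinearMap.ext fun x => ?_
        rw [ContinuousLinearMap.smulRight_apply, smul_zero, ContinuousLinearMap.zero_apply]
      rw [hz'] at h0
      exact h0.fderiv
    have hz20 : z.2 0 ∈ Metric.ball (0:ℝ) r := by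
      rw [mem_ball_zero_iff]
      exact lt_of_le_of_lt ((norm_le_pi_norm z.2 0).trans (norm_snd_le z)) hz
    have hcz : c + (z.2 0) • e = z := by
      rw [hline_pt]
      exact Prod.ext rfl (Function.update_eq_self 0 z.2)
    have h5 := hconst (z.2 0) hz20
    rw [hg] at h5
    simp only [hcz, zero_smul, add_zero, sub_zero] at h5
    exact eq_add_of_sub_eq h5
  set ι : ((Fin (n+1) → ℝ) × (Fin n → ℝ)) → PQ (n+1) :=
    fun w => (w.1, Fin.cons 0 w.2) with hι
  have hc_eq : ∀ z : PQ (n+1),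
      (z.1, Function.update z.2 0 0) = ι (z.1, fun j => z.2 j.succ) := by
    intro z
    refine Prod.ext rfl ?_
    funext j
    refine Fin.cases ?_ (fun i => ?_) j
    · simp [hι]
    · simp [Function.update_of_ne (Fin.succ_ne_zero i), hι]
  have hιsmooth : ContDiff ℝ (⊤:ℕ∞) ι := by
    refine ContDiff.prodMk contDiff_fst ?_
    refine contDiff_pi.mpr fun j => ?_
    refine Fin.cases ?_ (fun i => ?_) j
    · simp only [Fin.cons_zero]; exact contDiff_const
    · simp only [Fin.cons_succ]
      exact (contDiff_pi.mp contDiff_id i).comp contDiff_snd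
  have hι0 : ι 0 = 0 := by
    rw [hι]
    refine Prod.ext rfl ?_
    funext j
    refine Fin.cases ?_ (fun i => ?_) j <;> simp
  have hV : ι ⁻¹' (Metric.ball (0 : PQ (n+1)) r)
      ∈ 𝓝 (0 : ((Fin (n+1) → ℝ) × (Fin n → ℝ))) := by
    refine (hιsmooth.continuous.continuousAt).preimage_mem_nhds ?_
    rw [hι0]
    exact Metric.ball_mem_nhds _ hr0
  have hΨι : ContDiffOn ℝ (⊤:ℕ∞) (fun w => Ψ (ι w)) (ι ⁻¹' Metric.ball 0 r) := by
    refine (hUs.mono ?_).comp hιsmooth.contDiffOn (Set.mapsTo_preimage ι _)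
    exact fun x hx => interior_subset ((hball hx).1.1)
  have heval2 : ∀ k : Fin (n+1), ContDiff ℝ (⊤:ℕ∞) (fun y : PQ (n+1) => y.2 k) :=
    fun k => (contDiff_pi.mp contDiff_id k).comp contDiff_snd
  have heval1 : ∀ k : Fin (n+1), ContDiff ℝ (⊤:ℕ∞) (fun y : PQ (n+1) => y.1 k) :=
    fun k => (contDiff_pi.mp contDiff_id k).comp contDiff_fst
  refine ⟨fun w => (Ψ (ι w)).2 0, fun i w => (Ψ (ι w)).1 i.succ,
    fun i w => (Ψ (ι w)).2 i.succ, ⟨_, hV, (heval2 0).comp_contDiffOn hΨι⟩,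
    fun i => ⟨_, hV, (heval1 i.succ).comp_contDiffOn hΨι⟩,
    fun i => ⟨_, hV, (heval2 i.succ).comp_contDiffOn hΨι⟩, ?_⟩
  filter_upwards [Filter.inter_mem (Metric.ball_mem_nhds (0 : PQ (n+1)) hr0) hWmem]
    with z hz
  obtain ⟨hzb, hzW⟩ := hz
  have hp1z : z ∈ {z : PQ (n+1) | (Ψ z).1 0 = z.1 0} := interior_subset hzW.1.2
  have hlz := hline z hzb
  rw [hc_eq z] at hlz
  refine ⟨hp1z, ?_, fun i => ⟨?_, ?_⟩⟩
  · rw [hlz, he]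
    simp [add_comm]
  · rw [hlz, he]
    simp
  · rw [hlz, he]
    simp [Pi.single_eq_of_ne (Fin.succ_ne_zero i)]
end
end
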